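/- arXiv:1411.3417 — 7 statements merged into one kernel-verified Lean document; each statement's English description precedes it below -/
import Mathlib

section
/- Fix a probability mass function p = (p_1, ..., p_m) with all p_i > 0, set σ(p) = sqrt(Σ p_i²) and p_max = max_i p_i. Let J_0, J_1, J_2, ... be i.i.d. [m]-valued random variables with law p, and let R = inf{k ≥ 1 : |{J_0, ..., J_k}| < k+1} be the first repeat time. Then for any t ∈ (0, 1/p_max), P(R ≥ t) ≤ 2·exp(−t²·σ²(p)/24). -/
open MeasureTheory ProbabilityTheory Finset

theorem atom_meas {m : ℕ} {Ω : Type} [MeasurableSpace Ω] (P : Measure Ω) [IsProbabilityMeasure P]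
    (J : ℕ → Ω → Fin m) (hindep : iIndepFun J P)
    (k : ℕ) (a : Fin k → Fin m) :
    P {ω | ∀ i : Fin k, J (i : ℕ) ω = a i} = ∏ i : Fin k, P {ω | J (i : ℕ) ω = a i} := by
  have h := hindep.measure_inter_preimage_eq_mul (Finset.range k)
    (sets := fun n => if h : n < k then {a ⟨n, h⟩} else Set.univ)
    (fun i _ => by split; exacts [measurableSet_singleton _, MeasurableSet.univ])
  have e1 : (⋂ i ∈ Finset.range k, J i ⁻¹' (if h : i < k then {a ⟨i, h⟩} else Set.univ))
      = {ω | ∀ i : Fin k, J (i : ℕ) ω = a i} := by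
    ext ω
    simp only [Set.mem_iInter, Finset.mem_range, Set.mem_preimage, Set.mem_setOf_eq]
    constructor
    · intro h i
      have := h i i.isLt
      rwa [dif_pos i.isLt, Set.mem_singleton_iff] at this
    · intro h i hi
      rw [dif_pos hi]
      exact h ⟨i, hi⟩
  rw [e1] at h
  rw [h, ← Fin.prod_univ_eq_prod_range
    (fun n => P (J n ⁻¹' (if h : n < k then {a ⟨n, h⟩} else Set.univ)))]
  refine Finset.prod_congr rfl fun i _ => ?_
  rw [dif_pos i.isLt]
  congr 1

theorem part_meas {m : ℕ} {Ω : Type} [MeasurableSpace Ω] (P : Measure Ω) [IsProbabilityMeasure P]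
    (J : ℕ → Ω → Fin m) (hmeas : ∀ n, Measurable (J n))
    (k : ℕ) (T : Finset (Fin k → Fin m)) :
    P {ω | (fun i : Fin k => J (i : ℕ) ω) ∈ T}
      = ∑ a ∈ T, P {ω | ∀ i : Fin k, J (i : ℕ) ω = a i} := by
  have e : {ω | (fun i : Fin k => J (i : ℕ) ω) ∈ T}
      = ⋃ a ∈ T, {ω | ∀ i : Fin k, J (i : ℕ) ω = a i} := by
    ext ω
    simp only [Set.mem_setOf_eq, Set.mem_iUnion, exists_prop]
    constructor
    · intro h; exact ⟨_, h, fun i => rfl⟩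
    · rintro ⟨a, ha, h⟩
      have : (fun i : Fin k => J (i : ℕ) ω) = a := funext h
      rwa [this]
  rw [e]
  refine measure_biUnion_finset ?_ ?_
  · intro a _ b _ hab
    refine Set.disjoint_left.2 fun ω ha hb => hab ?_
    funext i
    exact (ha i).symm.trans (hb i)
  · intro a _
    have : {ω | ∀ i : Fin k, J (i : ℕ) ω = a i} = ⋂ i : Fin k, (J i) ⁻¹' {a i} := by
      ext ω; simp [Set.mem_iInter]
    rw [this]
    exact MeasurableSet.iInter fun i => (hmeas i) (measurableSet_singleton _)

theorem sum_prod_fun {m h : ℕ} (w : Fin m → ℝ) :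
    ∑ c : Fin h → Fin m, ∏ j, w (c j) = (∑ v, w v) ^ h := by
  rw [Finset.sum_pow' Finset.univ w h, Fintype.piFinset_univ]

theorem reindex_pairs {m h : ℕ} (F : (Fin (h + h) → Fin m) → ℝ) :
    ∑ a : Fin (h + h) → Fin m, F a
      = ∑ bc : (Fin h → Fin m) × (Fin h → Fin m), F (Fin.append bc.1 bc.2) := by
  have key : ∀ a : Fin (h + h) → Fin m,
      Fin.append (fun i => a (Fin.castAdd h i)) (fun j => a (Fin.natAdd h j)) = a := by
    intro a
    funext x
    refine Fin.addCases (fun i => ?_) (fun j => ?_) x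
    · rw [Fin.append_left]
    · rw [Fin.append_right]
  refine Finset.sum_nbij' (fun a => (fun i => a (Fin.castAdd h i), fun j => a (Fin.natAdd h j)))
    (fun bc => Fin.append bc.1 bc.2) (fun _ _ => mem_univ _) (fun _ _ => mem_univ _)
    (fun a _ => key a) ?_ ?_
  · rintro ⟨b, c⟩ _
    simp only [Prod.mk.injEq]
    constructor
    · funext i; rw [Fin.append_left]
    · funext j; rw [Fin.append_right]
  · intro a _
    rw [key a]

theorem comb_bound (m h : ℕ) (p : Fin m → ℝ) (hp : ∀ v, 0 ≤ p v) (hp1 : ∑ v, p v = 1) :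
    ∑ a ∈ Finset.univ.filter (fun a : Fin (h + h) → Fin m => Function.Injective a),
        ∏ i, p (a i)
      ≤ (∑ v, p v * Real.exp (-((h : ℝ) * p v))) ^ h := by
  classical
  rw [Finset.sum_filter]
  rw [reindex_pairs (fun a => if Function.Injective a then ∏ i, p (a i) else 0)]
  rw [Fintype.sum_prod_type]
  have hterm : ∀ b c : Fin h → Fin m,
      (if Function.Injective (Fin.append b c) then ∏ i, p (Fin.append b c i) else 0)
        ≤ (if Function.Injective b then ∏ i, p (b i) else 0) *
          (if (∀ j, b ⁻¹' {c j} = ∅) then ∏ j, p (c j) else 0) := by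
    intro b c
    by_cases hI : Function.Injective (Fin.append b c)
    · rw [if_pos hI]
      have hb : Function.Injective b := by
        intro i i' hii
        have := hI (a₁ := Fin.castAdd h i) (a₂ := Fin.castAdd h i')
          (by rwa [Fin.append_left, Fin.append_left])
        exact Fin.castAdd_injective _ _ this
      have hc : ∀ j, b ⁻¹' {c j} = ∅ := by
        intro j
        ext i
        simp only [Set.mem_preimage, Set.mem_singleton_iff, Set.mem_empty_iff_false, iff_false]
        intro hical
        have := hI (a₁ := Fin.castAdd h i) (a₂ := Fin.natAdd h j)
          (by rw [Fin.append_left, Fin.append_right]; exact hical)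
        exact absurd (congrArg Fin.val this) (by simp; omega)
      rw [if_pos hb, if_pos hc, Fin.prod_univ_add (f := fun i => p (Fin.append b c i))]
      simp only [Fin.append_left, Fin.append_right, le_refl]
    · rw [if_neg hI]
      have h1 : (0:ℝ) ≤ if Function.Injective b then ∏ i, p (b i) else 0 := by
        split
        · exact Finset.prod_nonneg fun _ _ => hp _
        · exact le_rfl
      have h2 : (0:ℝ) ≤ if (∀ j, b ⁻¹' {c j} = ∅) then ∏ j, p (c j) else 0 := by
        split
        · exact Finset.prod_nonneg fun _ _ => hp _
        · exact le_rfl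
      exact mul_nonneg h1 h2
  refine le_trans (Finset.sum_le_sum fun b _ => Finset.sum_le_sum fun c _ => hterm b c) ?_
  simp_rw [← Finset.mul_sum]
  have hinner : ∀ b : Fin h → Fin m,
      ∑ c : Fin h → Fin m, (if (∀ j, b ⁻¹' {c j} = ∅) then ∏ j, p (c j) else 0)
        = (∑ v ∈ univ.filter (fun v => v ∉ Finset.image b univ), p v) ^ h := by
    intro b
    rw [← Finset.sum_filter]
    rw [Finset.sum_pow' (univ.filter (fun v => v ∉ Finset.image b univ)) p h]
    refine Finset.sum_congr ?_ (fun _ _ => rfl)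
    ext c
    simp only [Finset.mem_filter, Finset.mem_univ, true_and, Fintype.mem_piFinset,
      Finset.mem_image, not_exists]
    constructor
    · intro hc j i hbi
      have h0 := hc j
      rw [Set.eq_empty_iff_forall_notMem] at h0
      exact h0 i (by simp [hbi])
    · intro hc j
      rw [Set.eq_empty_iff_forall_notMem]
      intro i hi
      have hbi : b i = c j := by simpa using hi
      exact hc j i hbi
  calc ∑ b : Fin h → Fin m, (if Function.Injective b then ∏ i, p (b i) else 0) *
        (∑ c : Fin h → Fin m, (if (∀ j, b ⁻¹' {c j} = ∅) then ∏ j, p (c j) else 0))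
      ≤ ∑ b : Fin h → Fin m, ∏ j, (p (b j) * Real.exp (-((h : ℝ) * p (b j)))) := by
        refine Finset.sum_le_sum fun b _ => ?_
        rw [hinner b]
        by_cases hb : Function.Injective b
        · rw [if_pos hb]
          set S := ∑ j, p (b j) with hS
          have him : univ.filter (fun v => v ∈ Finset.image b univ) = Finset.image b univ := by
            ext v; simp
          have hsum_im : ∑ v ∈ Finset.image b univ, p v = S := by
            rw [Finset.sum_image (fun i _ j _ hij => hb hij)]
          have hsplit := Finset.sum_filter_add_sum_filter_not univ
            (fun v => v ∈ Finset.image b univ) p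
          have hsb : (∑ v ∈ univ.filter (fun v => v ∉ Finset.image b univ), p v) = 1 - S := by
            have : ∑ v ∈ univ.filter (fun v => v ∈ Finset.image b univ), p v = S := by
              rw [him, hsum_im]
            rw [hp1] at hsplit
            linarith
          rw [hsb]
          have hs_nonneg : (0:ℝ) ≤ 1 - S := by
            rw [← hsb]
            exact Finset.sum_nonneg fun v _ => hp v
          have hle : (1 - S : ℝ) ≤ Real.exp (-S) := by
            have := Real.add_one_le_exp (-S)
            linarith
          have hpow : (1 - S : ℝ) ^ h ≤ Real.exp (-S) ^ h :=
            pow_le_pow_left₀ hs_nonneg hle h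
          have hexp : Real.exp (-S) ^ h = ∏ j, Real.exp (-((h : ℝ) * p (b j))) := by
            rw [← Real.exp_sum]
            rw [← Real.exp_nat_mul]
            congr 1
            simp only [Finset.sum_neg_distrib, ← Finset.mul_sum]
            rw [hS]
            ring
          rw [Finset.prod_mul_distrib]
          refine mul_le_mul_of_nonneg_left ?_ (Finset.prod_nonneg fun _ _ => hp _)
          rw [← hexp]
          exact hpow
        · rw [if_neg hb, zero_mul]
          exact Finset.prod_nonneg fun j _ => mul_nonneg (hp _) (Real.exp_pos _).le
    _ = (∑ v, p v * Real.exp (-((h : ℝ) * p v))) ^ h :=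
        sum_prod_fun (fun v => p v * Real.exp (-((h : ℝ) * p v)))

theorem exp_neg_le {u : ℝ} (h0 : 0 ≤ u) (h1 : u ≤ 1) :
    Real.exp (-u) ≤ 1 - u + u ^ 2 / 2 + (2 / 9) * u ^ 3 := by
  have hb := Real.exp_bound (x := -u) (by rwa [abs_neg, abs_of_nonneg h0]) (n := 3) (by norm_num)
  have h3 : ∑ m ∈ Finset.range 3, (-u) ^ m / m.factorial = 1 - u + u^2/2 := by
    simp [Finset.sum_range_succ, Nat.factorial]
    ring
  rw [h3, abs_neg, abs_of_nonneg h0, abs_le] at hb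
  have h2 := hb.2
  norm_num [Nat.factorial] at h2
  linarith

theorem mgf_bound (m h : ℕ) (p : Fin m → ℝ) (hp : ∀ v, 0 < p v) (hp1 : ∑ v, p v = 1)
    (hβ : ∀ v, (h : ℝ) * p v ≤ 2 / 3) :
    ∑ v, p v * Real.exp (-((h : ℝ) * p v)) ≤ 1 - (46 / 81) * h * (∑ v, p v ^ 2) := by
  have hterm : ∀ v, p v * Real.exp (-((h : ℝ) * p v))
      ≤ p v - (46 / 81) * (h : ℝ) * p v ^ 2 := by
    intro v
    set u := (h : ℝ) * p v with hu
    have hu0 : 0 ≤ u := mul_nonneg (Nat.cast_nonneg _) (hp v).le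
    have hu1 : u ≤ 1 := le_trans (hβ v) (by norm_num)
    have he := exp_neg_le hu0 hu1
    have key : 1 - u + u ^ 2 / 2 + (2 / 9) * u ^ 3 ≤ 1 - (46 / 81) * u := by
      nlinarith [hβ v, sq_nonneg u, hu0]
    have := mul_le_mul_of_nonneg_left (le_trans he key) (hp v).le
    calc p v * Real.exp (-u) ≤ p v * (1 - (46/81) * u) := this
      _ = p v - (46 / 81) * (h:ℝ) * p v ^ 2 := by rw [hu]; ring
  calc ∑ v, p v * Real.exp (-((h : ℝ) * p v))
      ≤ ∑ v, (p v - (46 / 81) * (h : ℝ) * p v ^ 2) := Finset.sum_le_sum fun v _ => hterm v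
    _ = 1 - (46 / 81) * h * (∑ v, p v ^ 2) := by
        rw [Finset.sum_sub_distrib, hp1, ← Finset.mul_sum]

/-- Tail bound for the first repeat time of an i.i.d. sequence with law `p`:
for `t ∈ (0, 1/p_max)` (equivalently `t < 1/p i` for all `i`),
`P(R ≥ t) ≤ 2 exp(−t² σ²(p)/24)` where `σ²(p) = Σ p_i²`. -/
theorem first_repeat_time_tail_bound {m : ℕ} (hm : 0 < m)
    (p : Fin m → ℝ) (hppos : ∀ i, 0 < p i) (hpsum : ∑ i, p i = 1)
    {Ω : Type} [MeasurableSpace Ω] (P : Measure Ω) [IsProbabilityMeasure P]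
    (J : ℕ → Ω → Fin m) (hmeas : ∀ n, Measurable (J n))
    (hindep : iIndepFun J P)
    (hlaw : ∀ n i, P {ω | J n ω = i} = ENNReal.ofReal (p i))
    (R : Ω → ℕ)
    (hR : ∀ ω, R ω = sInf {k : ℕ | ∃ i j, i < j ∧ j ≤ k ∧ J i ω = J j ω})
    (t : ℝ) (ht0 : 0 < t) (htmax : ∀ i, t < 1 / p i) :
    P {ω | t ≤ (R ω : ℝ)}
      ≤ ENNReal.ofReal (2 * Real.exp (-(t ^ 2 * ∑ i, (p i) ^ 2) / 24)) := by
  classical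
  have hσ0 : (0:ℝ) ≤ ∑ i, (p i) ^ 2 := Finset.sum_nonneg fun i _ => sq_nonneg _
  have htp : ∀ i, t * p i < 1 := by
    intro i
    have := htmax i
    rwa [lt_div_iff₀ (hppos i)] at this
  have htσ : t ^ 2 * ∑ i, (p i) ^ 2 ≤ t := by
    have : ∀ i ∈ Finset.univ, t ^ 2 * p i ^ 2 ≤ t * p i := by
      intro i _
      have h1 := htp i
      have h2 := (hppos i).le
      nlinarith [mul_nonneg (ht0.le) h2]
    calc t ^ 2 * ∑ i, (p i) ^ 2 = ∑ i, t ^ 2 * p i ^ 2 := by rw [Finset.mul_sum]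
      _ ≤ ∑ i, t * p i := Finset.sum_le_sum this
      _ = t := by rw [← Finset.mul_sum, hpsum, mul_one]
  by_cases hcase : t < 3
  · have hx : (t ^ 2 * ∑ i, (p i) ^ 2) / 24 < 1 / 8 := by linarith
    have hx0 : 0 ≤ (t ^ 2 * ∑ i, (p i) ^ 2) / 24 := by positivity
    have h1 : (1:ℝ) ≤ 2 * Real.exp (-(t ^ 2 * ∑ i, p i ^ 2) / 24) := by
      have he := Real.add_one_le_exp (-(t ^ 2 * ∑ i, p i ^ 2) / 24)
      nlinarith
    calc P {ω | t ≤ (R ω : ℝ)} ≤ 1 := prob_le_one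
      _ = ENNReal.ofReal 1 := by simp
      _ ≤ ENNReal.ofReal (2 * Real.exp (-(t ^ 2 * ∑ i, (p i) ^ 2) / 24)) :=
          ENNReal.ofReal_le_ofReal h1
  · push_neg at hcase
    set n := ⌈t⌉₊ with hn
    set h := n / 2 with hh
    have htn : t ≤ (n : ℝ) := Nat.le_ceil t
    have hn3 : 3 ≤ n := by
      have : (3:ℝ) ≤ (n:ℝ) := le_trans hcase htn
      exact_mod_cast this
    have hnt1 : (n : ℝ) < t + 1 := Nat.ceil_lt_add_one ht0.le
    have h2h : h + h ≤ n := by omega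
    have hhn : n ≤ h + h + 1 := by omega
    have hht : t - 1 ≤ 2 * (h : ℝ) := by
      have : (n : ℝ) ≤ (h : ℝ) + (h : ℝ) + 1 := by exact_mod_cast hhn
      linarith
    have hh2 : 2 * (h : ℝ) ≤ t + 1 := by
      have : ((h : ℕ) : ℝ) + (h : ℝ) ≤ (n : ℝ) := by exact_mod_cast h2h
      linarith
    have hβ : ∀ v, (h : ℝ) * p v ≤ 2 / 3 := by
      intro v
      have h1 := htp v
      have h2 := hppos v
      nlinarith
    -- inclusion into the injectivity event
    set T : Finset (Fin (h + h) → Fin m) :=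
      Finset.univ.filter (fun a : Fin (h + h) → Fin m => Function.Injective a) with hT
    have hincl : {ω | t ≤ (R ω : ℝ)} ⊆ {ω | (fun i : Fin (h + h) => J (i : ℕ) ω) ∈ T} := by
      intro ω hω
      simp only [Set.mem_setOf_eq] at hω
      have hRn : n ≤ R ω := Nat.ceil_le.mpr hω
      have key : ∀ i j : Fin (h + h), (i : ℕ) < (j : ℕ) → J (i : ℕ) ω ≠ J (j : ℕ) ω := by
        intro i j hij heq
        have hmem : (j : ℕ) ∈ {k : ℕ | ∃ i' j', i' < j' ∧ j' ≤ k ∧ J i' ω = J j' ω} :=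
          ⟨(i : ℕ), (j : ℕ), hij, le_rfl, heq⟩
        have hR1 : R ω ≤ (j : ℕ) := by rw [hR ω]; exact Nat.sInf_le hmem
        have hj : (j : ℕ) < h + h := j.isLt
        omega
      simp only [hT, Set.mem_setOf_eq, Finset.mem_filter, Finset.mem_univ, true_and]
      intro i j heq
      rcases Nat.lt_trichotomy (i : ℕ) (j : ℕ) with hlt | heqn | hgt
      · exact absurd heq (key i j hlt)
      · exact Fin.ext heqn
      · exact absurd heq.symm (key j i hgt)
    -- real chain
    have hA0 : (0:ℝ) ≤ ∑ v, p v * Real.exp (-((h : ℝ) * p v)) :=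
      Finset.sum_nonneg fun v _ => mul_nonneg (hppos v).le (Real.exp_pos _).le
    have hA := mgf_bound m h p hppos hpsum hβ
    have hB0 : (0:ℝ) ≤ 1 - (46 / 81) * (h : ℝ) * (∑ v, p v ^ 2) := le_trans hA0 hA
    have hBe : (1 - (46 / 81) * (h : ℝ) * (∑ v, p v ^ 2))
        ≤ Real.exp (-((46 / 81) * (h : ℝ) * (∑ v, p v ^ 2))) := by
      have := Real.add_one_le_exp (-((46 / 81) * (h : ℝ) * (∑ v, p v ^ 2)))
      linarith
    have hexpfin : Real.exp (-((46 / 81) * (h : ℝ) * (∑ v, p v ^ 2))) ^ h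
        ≤ Real.exp (-(t ^ 2 * ∑ i, (p i) ^ 2) / 24) := by
      rw [← Real.exp_nat_mul]
      refine Real.exp_le_exp.mpr ?_
      have hsq : t ^ 2 / 24 ≤ (46 / 81) * (h : ℝ) ^ 2 := by
        nlinarith [sq_nonneg (2 * (h : ℝ) - (t - 1)), sq_nonneg (t - 3)]
      nlinarith [mul_le_mul_of_nonneg_right hsq hσ0]
    have hreal : ∑ a ∈ T, ∏ i, p (a i) ≤ 2 * Real.exp (-(t ^ 2 * ∑ i, (p i) ^ 2) / 24) := by
      calc ∑ a ∈ T, ∏ i, p (a i)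
          ≤ (∑ v, p v * Real.exp (-((h : ℝ) * p v))) ^ h :=
            comb_bound m h p (fun v => (hppos v).le) hpsum
        _ ≤ (1 - (46 / 81) * (h : ℝ) * (∑ v, p v ^ 2)) ^ h := pow_le_pow_left₀ hA0 hA h
        _ ≤ Real.exp (-((46 / 81) * (h : ℝ) * (∑ v, p v ^ 2))) ^ h :=
            pow_le_pow_left₀ hB0 hBe h
        _ ≤ Real.exp (-(t ^ 2 * ∑ i, (p i) ^ 2) / 24) := hexpfin
        _ ≤ 2 * Real.exp (-(t ^ 2 * ∑ i, (p i) ^ 2) / 24) := by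
            nlinarith [Real.exp_pos (-(t ^ 2 * ∑ i, (p i) ^ 2) / 24)]
    calc P {ω | t ≤ (R ω : ℝ)}
        ≤ P {ω | (fun i : Fin (h + h) => J (i : ℕ) ω) ∈ T} := measure_mono hincl
      _ = ∑ a ∈ T, P {ω | ∀ i : Fin (h + h), J (i : ℕ) ω = a i} := part_meas P J hmeas _ T
      _ = ∑ a ∈ T, ENNReal.ofReal (∏ i, p (a i)) := by
          refine Finset.sum_congr rfl fun a _ => ?_
          rw [atom_meas P J hindep _ a]
          calc ∏ i : Fin (h + h), P {ω | J (i : ℕ) ω = a i}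
              = ∏ i : Fin (h + h), ENNReal.ofReal (p (a i)) :=
                Finset.prod_congr rfl fun i _ => hlaw (i : ℕ) (a i)
            _ = ENNReal.ofReal (∏ i, p (a i)) :=
                (ENNReal.ofReal_prod_of_nonneg (fun i _ => (hppos (a i)).le)).symm
      _ = ENNReal.ofReal (∑ a ∈ T, ∏ i, p (a i)) :=
          (ENNReal.ofReal_sum_of_nonneg
            (fun a _ => Finset.prod_nonneg fun i _ => (hppos (a i)).le)).symm
      _ ≤ ENNReal.ofReal (2 * Real.exp (-(t ^ 2 * ∑ i, (p i) ^ 2) / 24)) :=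
          ENNReal.ofReal_le_ofReal hreal
end

section
/- Fix μ > 0 and ν > 1, and set s₁(t) = μ·e^{−2t}. The function s₂(t) = μ·e^{−2t}·(−2ν + (ν−1)e^{2t}) / (−ν + (ν−1)e^{2t}) is the unique solution on [0, t_c) of the ODE s₂′(t) = (1/s₁(t))·[2s₂(t)² + 4s₁(t)² − 8s₂(t)s₁(t)] with initial condition s₂(0) = (ν+1)μ, where t_c = (1/2)·log(ν/(ν−1)). -/
open Set

/-- The explicit function `s₂` is the unique solution on `[0, t_c)` of the susceptibility ODE
`s₂′ = (1/s₁)(2s₂² + 4s₁² − 8 s₂ s₁)` with `s₂(0) = (ν+1)μ`, where `s₁(t) = μ e^{−2t}`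
and `t_c = ½ log(ν/(ν−1))`. -/
theorem susceptibility_s2_unique_solution
    (μ ν : ℝ) (hμ : 0 < μ) (hν : 1 < ν)
    (tc : ℝ) (htc : tc = (1 / 2) * Real.log (ν / (ν - 1)))
    (s1 s2 : ℝ → ℝ)
    (hs1 : ∀ t, s1 t = μ * Real.exp (-2 * t))
    (hs2 : ∀ t, s2 t =
      μ * Real.exp (-2 * t) * (-2 * ν + (ν - 1) * Real.exp (2 * t)) /
        (-ν + (ν - 1) * Real.exp (2 * t))) :
    (s2 0 = (ν + 1) * μ ∧
      ∀ t ∈ Ico (0 : ℝ) tc,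
        HasDerivWithinAt s2
          ((1 / s1 t) * (2 * (s2 t) ^ 2 + 4 * (s1 t) ^ 2 - 8 * (s2 t) * (s1 t)))
          (Ico (0 : ℝ) tc) t) ∧
    ∀ f : ℝ → ℝ, f 0 = (ν + 1) * μ →
      (∀ t ∈ Ico (0 : ℝ) tc,
        HasDerivWithinAt f
          ((1 / s1 t) * (2 * (f t) ^ 2 + 4 * (s1 t) ^ 2 - 8 * (f t) * (s1 t)))
          (Ico (0 : ℝ) tc) t) →
      ∀ t ∈ Ico (0 : ℝ) tc, f t = s2 t := by
  have hν0 : (0:ℝ) < ν - 1 := by linarith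
  have hμ' : μ ≠ 0 := hμ.ne'
  -- the denominator is negative (hence nonzero) on `[0, tc)`
  have hD : ∀ t : ℝ, t < tc → -ν + (ν - 1) * Real.exp (2 * t) < 0 := by
    intro t ht
    have h1 : (2:ℝ) * t < Real.log (ν / (ν - 1)) := by
      rw [htc] at ht; linarith
    have h2 : Real.exp (2 * t) < ν / (ν - 1) := by
      have := Real.exp_lt_exp.mpr h1
      rwa [Real.exp_log (by positivity)] at this
    have h3 : (ν - 1) * Real.exp (2 * t) < ν := by
      rw [lt_div_iff₀ hν0] at h2
      linarith
    linarith
  -- initial condition for s2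
  have hinit : s2 0 = (ν + 1) * μ := by
    rw [hs2 0]
    norm_num
    have h : -ν + (ν - 1) = -1 := by ring
    rw [h]
    field_simp
    ring
  -- derivative of s2 as an unrestricted HasDerivAt
  have hderiv : ∀ t : ℝ, t < tc →
      HasDerivAt s2
        ((1 / s1 t) * (2 * (s2 t) ^ 2 + 4 * (s1 t) ^ 2 - 8 * (s2 t) * (s1 t))) t := by
    intro t ht
    have hDt := hD t ht
    have hDne : -ν + (ν - 1) * Real.exp (2 * t) ≠ 0 := ne_of_lt hDt
    have h2t : HasDerivAt (fun t : ℝ => 2 * t) 2 t := by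
      simpa using (hasDerivAt_id t).const_mul (2:ℝ)
    have hm2t : HasDerivAt (fun t : ℝ => -2 * t) (-2) t := by
      simpa using (hasDerivAt_id t).const_mul (-2:ℝ)
    have hE : HasDerivAt (fun t : ℝ => Real.exp (2 * t)) (Real.exp (2 * t) * 2) t := h2t.exp
    have hEneg : HasDerivAt (fun t : ℝ => Real.exp (-2 * t)) (Real.exp (-2 * t) * (-2)) t :=
      hm2t.exp
    have h1 : HasDerivAt (fun t : ℝ => μ * Real.exp (-2 * t))
        (μ * (Real.exp (-2 * t) * (-2))) t := hEneg.const_mul μ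
    have h2 : HasDerivAt (fun t : ℝ => -2 * ν + (ν - 1) * Real.exp (2 * t))
        ((ν - 1) * (Real.exp (2 * t) * 2)) t := (hE.const_mul (ν - 1)).const_add (-2 * ν)
    have hDder : HasDerivAt (fun t : ℝ => -ν + (ν - 1) * Real.exp (2 * t))
        ((ν - 1) * (Real.exp (2 * t) * 2)) t := (hE.const_mul (ν - 1)).const_add (-ν)
    have hN : HasDerivAt (fun t : ℝ => μ * Real.exp (-2 * t) * (-2 * ν + (ν - 1) * Real.exp (2 * t)))
        (μ * (Real.exp (-2 * t) * (-2)) * (-2 * ν + (ν - 1) * Real.exp (2 * t)) +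
          μ * Real.exp (-2 * t) * ((ν - 1) * (Real.exp (2 * t) * 2))) t := h1.mul h2
    have hfun : s2 = fun t : ℝ =>
        μ * Real.exp (-2 * t) * (-2 * ν + (ν - 1) * Real.exp (2 * t)) /
          (-ν + (ν - 1) * Real.exp (2 * t)) := funext hs2
    have hdiv : HasDerivAt s2
        (((μ * (Real.exp (-2 * t) * (-2)) * (-2 * ν + (ν - 1) * Real.exp (2 * t)) +
          μ * Real.exp (-2 * t) * ((ν - 1) * (Real.exp (2 * t) * 2))) *
            (-ν + (ν - 1) * Real.exp (2 * t)) -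
          μ * Real.exp (-2 * t) * (-2 * ν + (ν - 1) * Real.exp (2 * t)) *
            ((ν - 1) * (Real.exp (2 * t) * 2))) /
          (-ν + (ν - 1) * Real.exp (2 * t)) ^ 2) t := by
      rw [hfun]; exact hN.div hDder hDne
    convert hdiv using 1
    rw [hs1, hs2]
    have hexp : Real.exp (-2 * t) = (Real.exp (2 * t))⁻¹ := by
      rw [← Real.exp_neg]; congr 1; ring
    rw [hexp]
    have hEne : Real.exp (2 * t) ≠ 0 := Real.exp_ne_zero _
    generalize hDD : -ν + (ν - 1) * Real.exp (2 * t) = D at hDne ⊢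
    field_simp
    rw [← hDD]
    ring
  refine ⟨⟨hinit, fun t ht => (hderiv t ht.2).hasDerivWithinAt⟩, ?_⟩
  -- uniqueness
  intro f hf0 hf' t ht
  obtain ⟨ht0, httc⟩ := ht
  have hsub : Icc (0:ℝ) t ⊆ Ico (0:ℝ) tc := fun τ hτ => ⟨hτ.1, lt_of_le_of_lt hτ.2 httc⟩
  -- continuity of f and s2 on `[0, t]`
  have hfc : ContinuousOn f (Icc 0 t) := fun τ hτ =>
    ((hf' τ (hsub hτ)).continuousWithinAt).mono hsub
  have hs2c : ContinuousOn s2 (Icc 0 t) := fun τ hτ =>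
    (hderiv τ (hsub hτ).2).continuousAt.continuousWithinAt
  -- bounds
  obtain ⟨Rf, hRf⟩ := isCompact_Icc.exists_bound_of_continuousOn hfc
  obtain ⟨Rs, hRs⟩ := isCompact_Icc.exists_bound_of_continuousOn hs2c
  set R : ℝ := max Rf Rs with hR
  have hfR : ∀ τ ∈ Icc (0:ℝ) t, f τ ∈ Icc (-R) R := by
    intro τ hτ
    have := (hRf τ hτ).trans (le_max_left Rf Rs)
    rw [Real.norm_eq_abs, abs_le] at this
    exact this
  have hsR : ∀ τ ∈ Icc (0:ℝ) t, s2 τ ∈ Icc (-R) R := by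
    intro τ hτ
    have := (hRs τ hτ).trans (le_max_right Rf Rs)
    rw [Real.norm_eq_abs, abs_le] at this
    exact this
  have hR0 : 0 ≤ R := by
    have := hfR 0 ⟨le_refl 0, ht0⟩
    have h1 := this.1; have h2 := this.2
    simp only [mem_Icc] at *
    linarith
  -- the (truncated) vector field
  set V : ℝ → ℝ → ℝ := fun τ x =>
    if τ ∈ Icc (0:ℝ) t then (1 / s1 τ) * (2 * x ^ 2 + 4 * (s1 τ) ^ 2 - 8 * x * (s1 τ)) else 0
    with hV
  set C : ℝ := (1 / (μ * Real.exp (-2 * t))) * (4 * R + 8 * μ) with hC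
  have hC0 : 0 ≤ C := by positivity
  have hlip : ∀ τ : ℝ, LipschitzOnWith C.toNNReal (V τ) (Icc (-R) R) := by
    intro τ
    apply LipschitzOnWith.of_dist_le_mul
    intro x hx y hy
    by_cases hτ : τ ∈ Icc (0:ℝ) t
    · simp only [hV, if_pos hτ]
      have hs1pos : 0 < s1 τ := by rw [hs1]; positivity
      have hxa : |x| ≤ R := abs_le.mpr ⟨hx.1, hx.2⟩
      have hya : |y| ≤ R := abs_le.mpr ⟨hy.1, hy.2⟩
      have hs1le : s1 τ ≤ μ := by
        rw [hs1]
        have : Real.exp (-2 * τ) ≤ 1 := Real.exp_le_one_iff.mpr (by nlinarith [hτ.1])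
        nlinarith
      have hs1ge : μ * Real.exp (-2 * t) ≤ s1 τ := by
        rw [hs1]
        have : Real.exp (-2 * t) ≤ Real.exp (-2 * τ) := Real.exp_le_exp.mpr (by nlinarith [hτ.2])
        nlinarith
      have a1 : |1 / s1 τ| ≤ 1 / (μ * Real.exp (-2 * t)) := by
        rw [abs_of_pos (by positivity)]
        exact one_div_le_one_div_of_le (by positivity) hs1ge
      have a2 : |2 * (x + y) - 8 * s1 τ| ≤ 4 * R + 8 * μ := by
        have h1 : |2 * (x + y) - 8 * s1 τ| ≤ |2 * (x + y)| + |8 * s1 τ| := abs_sub _ _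
        have h2 : |2 * (x + y)| ≤ 2 * (|x| + |y|) := by
          rw [abs_mul]
          simp only [abs_two]
          have := abs_add_le x y
          nlinarith [abs_nonneg (x + y)]
        have h3 : |8 * s1 τ| = 8 * s1 τ := abs_of_pos (by positivity)
        nlinarith
      have key : (1 / s1 τ) * (2 * x ^ 2 + 4 * (s1 τ) ^ 2 - 8 * x * (s1 τ)) -
          (1 / s1 τ) * (2 * y ^ 2 + 4 * (s1 τ) ^ 2 - 8 * y * (s1 τ)) =
          (1 / s1 τ) * ((x - y) * (2 * (x + y) - 8 * s1 τ)) := by ring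
      rw [Real.dist_eq, Real.dist_eq, key, abs_mul, abs_mul]
      have hcoe : (C.toNNReal : ℝ) = C := Real.coe_toNNReal C hC0
      rw [hcoe, hC]
      have := mul_le_mul a1
        (mul_le_mul_of_nonneg_left a2 (abs_nonneg (x - y)))
        (by positivity) (by positivity)
      calc |1 / s1 τ| * (|x - y| * |2 * (x + y) - 8 * s1 τ|)
          ≤ 1 / (μ * Real.exp (-2 * t)) * (|x - y| * (4 * R + 8 * μ)) := this
        _ = 1 / (μ * Real.exp (-2 * t)) * (4 * R + 8 * μ) * |x - y| := by ring
    · simp only [hV, if_neg hτ]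
      simp only [dist_self]
      positivity
  -- derivatives within `Ici τ`
  have hmem : ∀ τ ∈ Ico (0:ℝ) t, Ico (0:ℝ) tc ∈ nhdsWithin τ (Ici τ) := by
    intro τ hτ
    have h1 : Iio tc ∈ nhds τ := Iio_mem_nhds (lt_trans hτ.2 httc)
    have h2 : Ici τ ∩ Iio tc ∈ nhdsWithin τ (Ici τ) :=
      Filter.inter_mem self_mem_nhdsWithin (mem_nhdsWithin_of_mem_nhds h1)
    refine Filter.mem_of_superset h2 ?_
    rintro x ⟨hx1, hx2⟩
    exact ⟨le_trans hτ.1 hx1, hx2⟩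
  have hfd : ∀ τ ∈ Ico (0:ℝ) t, HasDerivWithinAt f (V τ (f τ)) (Ici τ) τ := by
    intro τ hτ
    have hτ' : τ ∈ Ico (0:ℝ) tc := ⟨hτ.1, lt_trans hτ.2 httc⟩
    have := (hf' τ hτ').mono_of_mem_nhdsWithin (hmem τ hτ)
    simpa only [hV, if_pos (mem_Icc.mpr ⟨hτ.1, le_of_lt hτ.2⟩)] using this
  have hsd : ∀ τ ∈ Ico (0:ℝ) t, HasDerivWithinAt s2 (V τ (s2 τ)) (Ici τ) τ := by
    intro τ hτ
    have hτ' : τ < tc := lt_trans hτ.2 httc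
    have := (hderiv τ hτ').hasDerivWithinAt (s := Ici τ)
    simpa only [hV, if_pos (mem_Icc.mpr ⟨hτ.1, le_of_lt hτ.2⟩)] using this
  have hfs : ∀ τ ∈ Ico (0:ℝ) t, f τ ∈ Icc (-R) R := fun τ hτ =>
    hfR τ ⟨hτ.1, le_of_lt hτ.2⟩
  have hss : ∀ τ ∈ Ico (0:ℝ) t, s2 τ ∈ Icc (-R) R := fun τ hτ =>
    hsR τ ⟨hτ.1, le_of_lt hτ.2⟩
  have heq0 : f 0 = s2 0 := by rw [hf0, hinit]
  have := ODE_solution_unique_of_mem_Icc_right (v := V) (s := fun _ => Icc (-R) R)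
    (fun τ _ => hlip τ) hfc hfd hfs hs2c hsd hss heq0
  exact this (right_mem_Icc.mpr ht0)
end

section
/- Fix μ > 0, ν > 1 and t_c = (1/2)log(ν/(ν−1)). The function g(t) = μ / (ν − (ν−1)e^{2t}) is the unique solution on [0, t_c) of the ODE g′(t) = (1/s₁(t))·[2g(t)s₂(t) − 4g(t)s₁(t)] with g(0) = μ, where s₁(t) = μe^{−2t} and s₂(t) = μe^{−2t}(−2ν + (ν−1)e^{2t})/(−ν + (ν−1)e^{2t}). Moreover, g(t)/s₂(t) → 1/(ν−1) as t ↑ t_c. -/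
open Filter Set

/-- The explicit function `g(t) = μ/(ν − (ν−1)e^{2t})` is the unique solution on `[0,t_c)` of
`g′ = (1/s₁)(2 g s₂ − 4 g s₁)` with `g(0) = μ`, and `g(t)/s₂(t) → 1/(ν−1)` as `t ↑ t_c`. -/
theorem mixed_susceptibility_g_unique_solution
    (μ ν : ℝ) (hμ : 0 < μ) (hν : 1 < ν)
    (tc : ℝ) (htc : tc = (1 / 2) * Real.log (ν / (ν - 1)))
    (s1 s2 g : ℝ → ℝ)
    (hs1 : ∀ t, s1 t = μ * Real.exp (-2 * t))
    (hs2 : ∀ t, s2 t =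
      μ * Real.exp (-2 * t) * (-2 * ν + (ν - 1) * Real.exp (2 * t)) /
        (-ν + (ν - 1) * Real.exp (2 * t)))
    (hg : ∀ t, g t = μ / (ν - (ν - 1) * Real.exp (2 * t))) :
    (g 0 = μ ∧
      ∀ t ∈ Ico (0 : ℝ) tc,
        HasDerivWithinAt g
          ((1 / s1 t) * (2 * g t * s2 t - 4 * g t * s1 t)) (Ico (0 : ℝ) tc) t) ∧
    (∀ f : ℝ → ℝ, f 0 = μ →
      (∀ t ∈ Ico (0 : ℝ) tc,
        HasDerivWithinAt f
          ((1 / s1 t) * (2 * f t * s2 t - 4 * f t * s1 t)) (Ico (0 : ℝ) tc) t) →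
      ∀ t ∈ Ico (0 : ℝ) tc, f t = g t) ∧
    Tendsto (fun t => g t / s2 t) (nhdsWithin tc (Iio tc)) (nhds (1 / (ν - 1))) := by
  have hν1 : (0:ℝ) < ν - 1 := by linarith
  have hμne : μ ≠ 0 := ne_of_gt hμ
  have hexpinv : ∀ t : ℝ, Real.exp (-2 * t) = (Real.exp (2 * t))⁻¹ := by
    intro t; rw [← Real.exp_neg]; ring_nf
  have hexp_tc : Real.exp (2 * tc) = ν / (ν - 1) := by
    rw [htc, show 2 * ((1:ℝ)/2 * Real.log (ν / (ν-1))) = Real.log (ν/(ν-1)) by ring]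
    exact Real.exp_log (by positivity)
  have hDpos : ∀ t < tc, 0 < ν - (ν - 1) * Real.exp (2 * t) := by
    intro t ht
    have h1 : Real.exp (2 * t) < Real.exp (2 * tc) := by
      apply Real.exp_lt_exp.2; linarith
    rw [hexp_tc] at h1
    have h2 := (mul_lt_mul_of_pos_left h1 hν1)
    rw [mul_div_cancel₀ _ (ne_of_gt hν1)] at h2
    linarith
  -- derivative of g
  have hgderiv : ∀ t < tc, HasDerivAt g
      (2 * μ * (ν - 1) * Real.exp (2 * t) / (ν - (ν - 1) * Real.exp (2 * t)) ^ 2) t := by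
    intro t ht
    have hD := hDpos t ht
    have hE : HasDerivAt (fun t : ℝ => Real.exp (2 * t)) (Real.exp (2 * t) * 2) t := by
      simpa using (HasDerivAt.exp (by simpa using (hasDerivAt_id t).const_mul (2:ℝ)))
    have hDd : HasDerivAt (fun t : ℝ => ν - (ν - 1) * Real.exp (2 * t))
        (0 - (ν - 1) * (Real.exp (2 * t) * 2)) t :=
      (hasDerivAt_const t ν).sub (hE.const_mul (ν - 1))
    have h := (hasDerivAt_const t μ).div hDd (ne_of_gt hD)
    have heq : (0 * (ν - (ν - 1) * Real.exp (2 * t)) -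
        μ * (0 - (ν - 1) * (Real.exp (2 * t) * 2))) / (ν - (ν - 1) * Real.exp (2 * t)) ^ 2
        = 2 * μ * (ν - 1) * Real.exp (2 * t) / (ν - (ν - 1) * Real.exp (2 * t)) ^ 2 := by
      ring
    rw [heq] at h
    have hfun : g = fun t => μ / (ν - (ν - 1) * Real.exp (2 * t)) := funext hg
    rw [hfun]
    exact h
  -- derivative value matches the ODE right-hand side
  have hval : ∀ t < tc,
      (1 / s1 t) * (2 * g t * s2 t - 4 * g t * s1 t)
        = 2 * μ * (ν - 1) * Real.exp (2 * t) / (ν - (ν - 1) * Real.exp (2 * t)) ^ 2 := by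
    intro t ht
    have hD := hDpos t ht
    have hDne : ν - (ν - 1) * Real.exp (2 * t) ≠ 0 := ne_of_gt hD
    have hD'ne : -ν + (ν - 1) * Real.exp (2 * t) ≠ 0 := fun h => hDne (by linarith)
    have hexpne : Real.exp (2 * t) ≠ 0 := Real.exp_ne_zero _
    rw [hs1, hs2, hg, hexpinv]
    rw [show -ν + (ν - 1) * Real.exp (2 * t) = -(ν - (ν - 1) * Real.exp (2 * t)) by ring]
    field_simp
    ring
  refine ⟨⟨?_, ?_⟩, ?_, ?_⟩
  · rw [hg]; norm_num
  · intro t ht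
    rw [hval t ht.2]
    exact (hgderiv t ht.2).hasDerivWithinAt
  · -- uniqueness
    intro f hf0 hfode t ht
    set D : ℝ → ℝ := fun t => ν - (ν - 1) * Real.exp (2 * t) with hDdef
    have hDd : ∀ u : ℝ, HasDerivAt D (-((ν - 1) * (Real.exp (2 * u) * 2))) u := by
      intro u
      have hE : HasDerivAt (fun t : ℝ => Real.exp (2 * t)) (Real.exp (2 * u) * 2) u := by
        simpa using (HasDerivAt.exp (by simpa using (hasDerivAt_id u).const_mul (2:ℝ)))
      exact (hE.const_mul (ν - 1)).const_sub ν
    have hzero : ∀ u ∈ Ico (0:ℝ) tc,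
        HasDerivWithinAt (fun t => f t * D t) 0 (Ico (0:ℝ) tc) u := by
      intro u hu
      have hfd := hfode u hu
      have hmul := hfd.mul ((hDd u).hasDerivWithinAt)
      have heq : (1 / s1 u) * (2 * f u * s2 u - 4 * f u * s1 u) * D u
          + f u * -((ν - 1) * (Real.exp (2 * u) * 2)) = 0 := by
        have hD := hDpos u hu.2
        have hDne : ν - (ν - 1) * Real.exp (2 * u) ≠ 0 := ne_of_gt hD
        have hD'ne : -ν + (ν - 1) * Real.exp (2 * u) ≠ 0 := fun h => hDne (by linarith)
        have hexpne : Real.exp (2 * u) ≠ 0 := Real.exp_ne_zero _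
        rw [hs1, hs2, hDdef, hexpinv]
        beta_reduce
        rw [show -ν + (ν - 1) * Real.exp (2 * u) = -(ν - (ν - 1) * Real.exp (2 * u)) by ring]
        have hDne2 : ν - Real.exp (2 * u) * (ν - 1) ≠ 0 := by rw [mul_comm]; exact hDne
        field_simp
        ring
      rw [heq] at hmul
      exact hmul
    have hconst : f t * D t = f 0 * D 0 := by
      apply (convex_Ico (0:ℝ) tc).is_const_of_fderivWithin_eq_zero
        (fun u hu => ((hzero u hu).differentiableWithinAt)) _ ht
        (⟨le_refl 0, lt_of_le_of_lt ht.1 ht.2⟩)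
      intro u hu
      have h := (hzero u hu).hasFDerivWithinAt.fderivWithin (uniqueDiffOn_Ico 0 tc u hu)
      rw [h]
      ext x; simp
    have hD0 : D 0 = 1 := by simp [hDdef]
    have hDne : D t ≠ 0 := ne_of_gt (hDpos t ht.2)
    rw [hD0, hf0, mul_one] at hconst
    rw [hg]
    have hDeq : D t = ν - (ν - 1) * Real.exp (2 * t) := rfl
    rw [eq_div_iff (hDeq ▸ hDne), ← hDeq, hconst]
  · -- limit
    have hkey : ∀ t < tc, g t / s2 t
        = Real.exp (2 * t) / (2 * ν - (ν - 1) * Real.exp (2 * t)) := by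
      intro t ht
      have hD := hDpos t ht
      have hDne : ν - (ν - 1) * Real.exp (2 * t) ≠ 0 := ne_of_gt hD
      have hD'ne : -ν + (ν - 1) * Real.exp (2 * t) ≠ 0 := fun h => hDne (by linarith)
      have hNum : -2 * ν + (ν - 1) * Real.exp (2 * t) ≠ 0 := by
        intro h; nlinarith
      have h2D : 2 * ν - (ν - 1) * Real.exp (2 * t) ≠ 0 := by
        intro h; nlinarith
      have hexpne : Real.exp (2 * t) ≠ 0 := Real.exp_ne_zero _
      have hs2ne : s2 t ≠ 0 := by
        rw [hs2]
        exact div_ne_zero (mul_ne_zero (mul_ne_zero hμne (Real.exp_ne_zero _)) hNum) hD'ne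
      rw [div_eq_div_iff hs2ne h2D, hg, hs2, hexpinv]
      field_simp
      ring
    have hden_tc : 2 * ν - (ν - 1) * Real.exp (2 * tc) = ν := by
      rw [hexp_tc]; field_simp; ring
    have h1 : ContinuousAt (fun t => Real.exp (2*t) / (2*ν - (ν-1)*Real.exp (2*t))) tc := by
      apply ContinuousAt.div
      · fun_prop
      · fun_prop
      · rw [hden_tc]; linarith
    have hvaltc : Real.exp (2*tc) / (2*ν - (ν-1)*Real.exp (2*tc)) = 1/(ν-1) := by
      rw [hden_tc, hexp_tc]
      field_simp
    have h2 : Tendsto (fun t => Real.exp (2*t) / (2*ν - (ν-1)*Real.exp (2*t)))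
        (nhdsWithin tc (Iio tc)) (nhds (1/(ν-1))) := by
      rw [← hvaltc]
      exact h1.tendsto.mono_left nhdsWithin_le_nhds
    exact h2.congr' (eventuallyEq_of_mem self_mem_nhdsWithin fun t ht => (hkey t ht).symm)
end

section
/- Fix μ > 0, ν > 1 and t_c = (1/2)log(ν/(ν−1)). The function D(t) = ν²μ(1 − e^{−2t}) / (ν − (ν−1)e^{2t})² is the unique solution on [0, t_c) of the ODE D′(t) = (1/s₁(t))·[4D(t)s₂(t) + 2s₂(t)² − 8D(t)s₁(t) − 4s₂(t)s₁(t) + 2s₁(t)²] with D(0) = 0, where s₁(t) = μe^{−2t} and s₂(t) is as given. Moreover D(t)/s₂(t)² → ν/(μ(ν−1)²) as t ↑ t_c. -/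
open Filter Set

set_option maxHeartbeats 1000000

/-- The explicit function `D(t) = ν²μ(1 − e^{−2t})/(ν − (ν−1)e^{2t})²` is the unique solution
on `[0,t_c)` of the distance-susceptibility ODE
`D′ = (1/s₁)(4Ds₂ + 2s₂² − 8Ds₁ − 4s₂s₁ + 2s₁²)` with `D(0) = 0`, and
`D(t)/s₂(t)² → ν/(μ(ν−1)²)` as `t ↑ t_c`. -/
theorem distance_susceptibility_unique_solution
    (μ ν : ℝ) (hμ : 0 < μ) (hν : 1 < ν)
    (tc : ℝ) (htc : tc = (1 / 2) * Real.log (ν / (ν - 1)))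
    (s1 s2 D : ℝ → ℝ)
    (hs1 : ∀ t, s1 t = μ * Real.exp (-2 * t))
    (hs2 : ∀ t, s2 t =
      μ * Real.exp (-2 * t) * (-2 * ν + (ν - 1) * Real.exp (2 * t)) /
        (-ν + (ν - 1) * Real.exp (2 * t)))
    (hD : ∀ t, D t =
      ν ^ 2 * μ * (1 - Real.exp (-2 * t)) / (ν - (ν - 1) * Real.exp (2 * t)) ^ 2) :
    (D 0 = 0 ∧
      ∀ t ∈ Ico (0 : ℝ) tc,
        HasDerivWithinAt D
          ((1 / s1 t) * (4 * D t * s2 t + 2 * (s2 t) ^ 2 - 8 * D t * s1 t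
            - 4 * s2 t * s1 t + 2 * (s1 t) ^ 2)) (Ico (0 : ℝ) tc) t) ∧
    (∀ f : ℝ → ℝ, f 0 = 0 →
      (∀ t ∈ Ico (0 : ℝ) tc,
        HasDerivWithinAt f
          ((1 / s1 t) * (4 * f t * s2 t + 2 * (s2 t) ^ 2 - 8 * f t * s1 t
            - 4 * s2 t * s1 t + 2 * (s1 t) ^ 2)) (Ico (0 : ℝ) tc) t) →
      ∀ t ∈ Ico (0 : ℝ) tc, f t = D t) ∧
    Tendsto (fun t => D t / (s2 t) ^ 2) (nhdsWithin tc (Iio tc))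
      (nhds (ν / (μ * (ν - 1) ^ 2))) := by
  have hν1 : (0:ℝ) < ν - 1 := by linarith
  have hfrac : (1:ℝ) < ν / (ν - 1) := by
    rw [lt_div_iff₀ hν1]; linarith
  have he2tc : Real.exp (2 * tc) = ν / (ν - 1) := by
    rw [htc, show 2 * (1 / 2 * Real.log (ν / (ν - 1))) = Real.log (ν / (ν - 1)) by ring,
      Real.exp_log (by positivity)]
  have htcpos : 0 < tc := by
    rw [htc]; have := Real.log_pos hfrac; linarith
  have hP : ∀ t < tc, 0 < ν - (ν - 1) * Real.exp (2 * t) := by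
    intro t ht
    have h1 : Real.exp (2 * t) < Real.exp (2 * tc) := Real.exp_lt_exp.2 (by linarith)
    rw [he2tc, lt_div_iff₀ hν1] at h1
    nlinarith
  have hE : ∀ s : ℝ, Real.exp (-2 * s) = (Real.exp (2 * s))⁻¹ := fun s => by
    rw [neg_mul, Real.exp_neg]
  -- basic derivative facts
  have hEd : ∀ t : ℝ, HasDerivAt (fun s : ℝ => Real.exp (2 * s)) (2 * Real.exp (2 * t)) t := by
    intro t
    have := ((hasDerivAt_id t).const_mul (2:ℝ)).exp
    simpa [mul_comm] using this
  have hE'd : ∀ t : ℝ, HasDerivAt (fun s : ℝ => Real.exp (-2 * s)) (-2 * Real.exp (-2 * t)) t := by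
    intro t
    have := ((hasDerivAt_id t).const_mul (-2:ℝ)).exp
    simpa [mul_comm] using this
  have hPd : ∀ t : ℝ, HasDerivAt (fun s : ℝ => ν - (ν - 1) * Real.exp (2 * s))
      (-((ν - 1) * (2 * Real.exp (2 * t)))) t := by
    intro t
    have := (hasDerivAt_const t ν).sub ((hEd t).const_mul (ν - 1))
    exact this.congr_deriv (by ring)
  have hden : ∀ t : ℝ, HasDerivAt (fun s : ℝ => (ν - (ν - 1) * Real.exp (2 * s)) ^ 2)
      (2 * (ν - (ν - 1) * Real.exp (2 * t)) ^ 1 * (-((ν - 1) * (2 * Real.exp (2 * t))))) t := by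
    intro t; exact ((hPd t).pow 2).congr_deriv (by norm_num)
  -- derivative of D at points where the denominator is nonzero
  have hDderiv : ∀ t < tc,
      HasDerivAt D
        ((1 / s1 t) * (4 * D t * s2 t + 2 * (s2 t) ^ 2 - 8 * D t * s1 t
          - 4 * s2 t * s1 t + 2 * (s1 t) ^ 2)) t := by
    intro t ht
    have hPt := hP t ht
    have hex : Real.exp (2 * t) ≠ 0 := Real.exp_ne_zero _
    have hPne : ν - (ν - 1) * Real.exp (2 * t) ≠ 0 := ne_of_gt hPt
    have hQne : -ν + (ν - 1) * Real.exp (2 * t) ≠ 0 := by intro h; apply hPne; linarith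
    have hnum : HasDerivAt (fun s : ℝ => ν ^ 2 * μ * (1 - Real.exp (-2 * s)))
        (ν ^ 2 * μ * (2 * Real.exp (-2 * t))) t := by
      have := ((hasDerivAt_const t (1:ℝ)).sub (hE'd t)).const_mul (ν ^ 2 * μ)
      exact this.congr_deriv (by ring)
    have hd := hnum.div (hden t) (pow_ne_zero 2 hPne)
    have hDfun : D = fun s => ν ^ 2 * μ * (1 - Real.exp (-2 * s)) /
        (ν - (ν - 1) * Real.exp (2 * s)) ^ 2 := funext hD
    rw [hDfun]
    refine hd.congr_deriv ?_
    simp only [hs1, hs2, hE]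
    generalize Real.exp (2 * t) = x at hex hPne hQne ⊢
    have hPne' : ν - x * (ν - 1) ≠ 0 := by rwa [mul_comm]
    have hQne' : -ν + x * (ν - 1) ≠ 0 := by rwa [mul_comm]
    field_simp
    ring
  have hmem0 : (0:ℝ) ∈ Ico (0:ℝ) tc := ⟨le_refl _, htcpos⟩
  have hD0 : D 0 = 0 := by
    rw [hD]; simp
  refine ⟨⟨hD0, fun t ht => (hDderiv t ht.2).hasDerivWithinAt⟩, ?_, ?_⟩
  · -- uniqueness
    intro f hf0 hfode t ht
    set g : ℝ → ℝ := fun s => (f s - D s) * (ν - (ν - 1) * Real.exp (2 * s)) ^ 2 with hg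
    have hgderiv : ∀ s ∈ Ico (0:ℝ) tc, HasDerivWithinAt g 0 (Ico (0:ℝ) tc) s := by
      intro s hs
      have hPs := hP s hs.2
      have hex : Real.exp (2 * s) ≠ 0 := Real.exp_ne_zero _
      have hPne : ν - (ν - 1) * Real.exp (2 * s) ≠ 0 := ne_of_gt hPs
      have hQne : -ν + (ν - 1) * Real.exp (2 * s) ≠ 0 := by intro h; apply hPne; linarith
      have hμne : μ ≠ 0 := ne_of_gt hμ
      have h1 := ((hfode s hs).sub ((hDderiv s hs.2).hasDerivWithinAt)).mul
        ((hden s).hasDerivWithinAt)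
      refine h1.congr_deriv ?_
      rw [hs1, hs2, hE s, Pi.sub_apply]
      generalize Real.exp (2 * s) = x at hex hPne hQne ⊢
      have hPne' : ν - x * (ν - 1) ≠ 0 := by rwa [mul_comm]
      have hQne' : -ν + x * (ν - 1) ≠ 0 := by rwa [mul_comm]
      field_simp
      ring
    have hdiff : DifferentiableOn ℝ g (Ico (0:ℝ) tc) :=
      fun s hs => (hgderiv s hs).differentiableWithinAt
    have hfd : ∀ s ∈ Ico (0:ℝ) tc, fderivWithin ℝ g (Ico (0:ℝ) tc) s = 0 := by
      intro s hs
      have h1 := (hgderiv s hs).hasFDerivWithinAt.fderivWithin (uniqueDiffOn_Ico 0 tc s hs)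
      have h2 : (ContinuousLinearMap.smulRight (1 : ℝ →L[ℝ] ℝ) (0 : ℝ)) = 0 := by
        ext x; simp
      exact h1.trans h2
    have hconst := (convex_Ico (0:ℝ) tc).is_const_of_fderivWithin_eq_zero hdiff hfd ht hmem0
    have hg0 : g 0 = 0 := by simp [hg, hf0, hD0]
    rw [hg0] at hconst
    have hPt := hP t ht.2
    have hPne : ν - (ν - 1) * Real.exp (2 * t) ≠ 0 := ne_of_gt hPt
    have : f t - D t = 0 := by
      rcases mul_eq_zero.1 hconst with h | h
      · exact h
      · exact absurd h (pow_ne_zero 2 hPne)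
    linarith
  · -- the limit
    have hGtend : Tendsto
        (fun t => ν ^ 2 * (1 - Real.exp (-2 * t)) * Real.exp (2 * t) ^ 2 /
          (μ * (2 * ν - (ν - 1) * Real.exp (2 * t)) ^ 2))
        (nhdsWithin tc (Iio tc)) (nhds (ν / (μ * (ν - 1) ^ 2))) := by
      have hden1 : (ν - 1) * Real.exp (2 * tc) = ν := by
        rw [he2tc]; field_simp
      have hdenG : μ * (2 * ν - (ν - 1) * Real.exp (2 * tc)) ^ 2 ≠ 0 := by
        rw [hden1, show 2 * ν - ν = ν by ring]
        positivity
      have hGcont : ContinuousAt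
          (fun t => ν ^ 2 * (1 - Real.exp (-2 * t)) * Real.exp (2 * t) ^ 2 /
            (μ * (2 * ν - (ν - 1) * Real.exp (2 * t)) ^ 2)) tc := by
        refine ContinuousAt.div ?_ ?_ hdenG
        · exact ((continuous_const.mul (continuous_const.sub
            (Real.continuous_exp.comp (continuous_const.mul continuous_id)))).mul
            ((Real.continuous_exp.comp (continuous_const.mul continuous_id)).pow 2)).continuousAt
        · exact (continuous_const.mul ((continuous_const.sub (continuous_const.mul
            (Real.continuous_exp.comp (continuous_const.mul continuous_id)))).pow 2)).continuousAt
      have hGval : ν ^ 2 * (1 - Real.exp (-2 * tc)) * Real.exp (2 * tc) ^ 2 /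
          (μ * (2 * ν - (ν - 1) * Real.exp (2 * tc)) ^ 2) = ν / (μ * (ν - 1) ^ 2) := by
        have hνne : ν ≠ 0 := by linarith
        have hν1ne : ν - 1 ≠ 0 := ne_of_gt hν1
        have hμne : μ ≠ 0 := ne_of_gt hμ
        rw [hE tc, he2tc, show (ν - 1) * (ν / (ν - 1)) = ν from by field_simp,
          show 2 * ν - ν = ν by ring]
        field_simp
        ring
      rw [← hGval]
      exact hGcont.continuousWithinAt.tendsto
    apply hGtend.congr'
    filter_upwards [eventually_mem_nhdsWithin] with s hs
    have hPs := hP s hs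
    have hex : Real.exp (2 * s) ≠ 0 := Real.exp_ne_zero _
    have hPne : ν - (ν - 1) * Real.exp (2 * s) ≠ 0 := ne_of_gt hPs
    have hQne : -ν + (ν - 1) * Real.exp (2 * s) ≠ 0 := by intro h; apply hPne; linarith
    have hRne : 2 * ν - (ν - 1) * Real.exp (2 * s) ≠ 0 := by
      have : 0 < 2 * ν - (ν - 1) * Real.exp (2 * s) := by nlinarith
      exact ne_of_gt this
    have hμne : μ ≠ 0 := ne_of_gt hμ
    have h2 : (-2 * ν + (ν - 1) * Real.exp (2 * s)) ≠ 0 := by intro h; apply hRne; linarith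
    refine Eq.symm ?_
    rw [hD, hs2, hE s]
    have key : (μ * (Real.exp (2 * s))⁻¹ * (-2 * ν + (ν - 1) * Real.exp (2 * s)) /
          (-ν + (ν - 1) * Real.exp (2 * s))) ^ 2
        = μ ^ 2 * (2 * ν - (ν - 1) * Real.exp (2 * s)) ^ 2 /
          (Real.exp (2 * s) ^ 2 * (ν - (ν - 1) * Real.exp (2 * s)) ^ 2) := by
      rw [div_pow, div_eq_div_iff (pow_ne_zero 2 hQne)
        (mul_ne_zero (pow_ne_zero 2 hex) (pow_ne_zero 2 hPne))]
      field_simp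
      ring
    rw [key]
    rw [div_div_eq_mul_div, div_mul_eq_mul_div, div_div]
    rw [div_eq_div_iff (by positivity) (by positivity)]
    field_simp
end

section
/- Let D be a finite set with strictly positive weights (w_v)_{v∈D}, and let (w_{v(1)}, w_{v(2)}, ..., w_{v(|D|)}) be the weights listed in a size-biased random order (v(1) is chosen with probability proportional to its weight, and inductively v(k) is chosen among the remaining elements with probability proportional to weight). Then for every k ≥ 1, w_{v(k)} is stochastically dominated by w_{v(1)}; in particular E[w_{v(k)}] ≤ E[w_{v(1)}]. -/
open scoped Classical

/-- The probability that a size-biased random ordering of `Fin m` with weights `w` equals the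
permutation `σ` (i.e. `v(k) = σ(k)` for all `k`). -/
noncomputable def sizeBiasedOrderProb {m : ℕ} (w : Fin m → ℝ) (σ : Equiv.Perm (Fin m)) : ℝ :=
  ∏ k : Fin m, w (σ k) / ∑ j ∈ Finset.univ.filter (fun j => k ≤ j), w (σ j)

section Aux

variable {m : ℕ} (w : Fin m → ℝ)

lemma sbop_tail_pos (hw : ∀ i, 0 < w i) (σ : Equiv.Perm (Fin m)) (i : Fin m) :
    0 < ∑ j ∈ Finset.univ.filter (fun j => i ≤ j), w (σ j) :=
  Finset.sum_pos (fun j _ => hw _) ⟨i, by simp⟩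

lemma sbop_eq_div (σ : Equiv.Perm (Fin m)) :
    sizeBiasedOrderProb w σ =
      (∏ i, w (σ i)) /
        ∏ i : Fin m, ∑ j ∈ Finset.univ.filter (fun j => i ≤ j), w (σ j) :=
  Finset.prod_div_distrib _ _

/-- Swapping positions `0` and `k` never decreases any tail sum deficit:
each tail sum of `σ * swap 0 k` is at most the corresponding tail of `σ`,
provided `w (σ 0) ≤ w (σ k)`. -/
lemma sbop_tail_swap_le (hm : 0 < m) (k : Fin m) (σ : Equiv.Perm (Fin m))
    (h : w (σ ⟨0, hm⟩) ≤ w (σ k)) (i : Fin m) :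
    ∑ j ∈ Finset.univ.filter (fun j => i ≤ j), w ((σ * Equiv.swap ⟨0, hm⟩ k) j)
      ≤ ∑ j ∈ Finset.univ.filter (fun j => i ≤ j), w (σ j) := by
  set z : Fin m := ⟨0, hm⟩ with hz
  set s := Equiv.swap z k with hs
  set S := Finset.univ.filter (fun j => i ≤ j) with hS
  by_cases hzS : z ∈ S
  · -- then i = 0 and S = univ; the two sums are equal (reindexing by s)
    have hiz : i = z := by
      have : i ≤ z := (Finset.mem_filter.mp hzS).2
      exact le_antisymm this (by exact Fin.mk_le_of_le_val (Nat.zero_le _))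
    have hSu : S = Finset.univ := by
      ext j
      simp [hS, hiz, hz, Fin.le_def]
    rw [hSu]
    refine le_of_eq ?_
    have := Equiv.sum_comp s (fun j => w (σ j))
    calc ∑ j : Fin m, w ((σ * s) j) = ∑ j : Fin m, w (σ (s j)) := by
          simp [Equiv.Perm.mul_apply]
      _ = ∑ j : Fin m, w (σ j) := this
  · -- z ∉ S; only the term at j = k can differ
    rw [← sub_nonpos, ← Finset.sum_sub_distrib]
    have hcong : ∀ j ∈ S, w ((σ * s) j) - w (σ j)
        = if j = k then w (σ z) - w (σ k) else 0 := by
      intro j hj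
      have hjz : j ≠ z := fun hh => hzS (hh ▸ hj)
      by_cases hjk : j = k
      · subst hjk
        simp [hs, Equiv.Perm.mul_apply, Equiv.swap_apply_right]
      · have : s j = j := Equiv.swap_apply_of_ne_of_ne hjz hjk
        simp [Equiv.Perm.mul_apply, this, hjk]
    rw [Finset.sum_congr rfl hcong, Finset.sum_ite_eq' S k (fun _ => w (σ z) - w (σ k))]
    split
    · exact sub_nonpos.mpr h
    · exact le_refl 0

/-- Core monotonicity: swapping positions `0` and `k` increases the probability,
when the element in position `k` is at least as heavy as the one in position `0`. -/
lemma sbop_swap_ge (hm : 0 < m) (hw : ∀ i, 0 < w i) (k : Fin m) (σ : Equiv.Perm (Fin m))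
    (h : w (σ ⟨0, hm⟩) ≤ w (σ k)) :
    sizeBiasedOrderProb w σ ≤ sizeBiasedOrderProb w (σ * Equiv.swap ⟨0, hm⟩ k) := by
  set z : Fin m := ⟨0, hm⟩ with hz
  set s := Equiv.swap z k with hs
  rw [sbop_eq_div, sbop_eq_div]
  have hNum : (∏ i, w ((σ * s) i)) = ∏ i, w (σ i) := by
    calc (∏ i, w ((σ * s) i)) = ∏ i, w (σ (s i)) := by simp [Equiv.Perm.mul_apply]
      _ = ∏ i, w (σ i) := Equiv.prod_comp s (fun i => w (σ i))
  rw [hNum]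
  have hNnonneg : 0 ≤ ∏ i, w (σ i) := Finset.prod_nonneg fun i _ => (hw _).le
  have hDpos : 0 < ∏ i : Fin m, ∑ j ∈ Finset.univ.filter (fun j => i ≤ j), w ((σ * s) j) :=
    Finset.prod_pos fun i _ => sbop_tail_pos w hw _ i
  have hDle : (∏ i : Fin m, ∑ j ∈ Finset.univ.filter (fun j => i ≤ j), w ((σ * s) j))
      ≤ ∏ i : Fin m, ∑ j ∈ Finset.univ.filter (fun j => i ≤ j), w (σ j) :=
    Finset.prod_le_prod (fun i _ => (sbop_tail_pos w hw _ i).le)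
      (fun i _ => sbop_tail_swap_le w hm k σ h i)
  exact div_le_div_of_nonneg_left hNnonneg hDpos hDle

/-- Main comparison: for any function `g` monotone with respect to the weights,
the expectation of `g` at position `k` is at most that at position `0`. -/
lemma sbop_mono (hm : 0 < m) (hw : ∀ i, 0 < w i) (k : Fin m) (g : Fin m → ℝ)
    (hg : ∀ i j : Fin m, w i ≤ w j → g i ≤ g j) :
    ∑ σ : Equiv.Perm (Fin m), sizeBiasedOrderProb w σ * g (σ k)
      ≤ ∑ σ : Equiv.Perm (Fin m), sizeBiasedOrderProb w σ * g (σ ⟨0, hm⟩) := by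
  set z : Fin m := ⟨0, hm⟩ with hz
  set s := Equiv.swap z k with hs
  set p := sizeBiasedOrderProb w with hp
  have hss : s * s = 1 := Equiv.swap_mul_self _ _
  have reidx : ∀ F : Equiv.Perm (Fin m) → ℝ, (∑ σ : Equiv.Perm (Fin m), F σ)
      = ∑ σ : Equiv.Perm (Fin m), F (σ * s) := by
    intro F
    exact (Fintype.sum_equiv (Equiv.mulRight s) _ _ (fun σ => by simp)).symm
  have hsz : s z = k := Equiv.swap_apply_left _ _
  have hsk : s k = z := Equiv.swap_apply_right _ _
  have h1 : (∑ σ : Equiv.Perm (Fin m), p σ * g (σ z))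
      = ∑ σ : Equiv.Perm (Fin m), p (σ * s) * g (σ k) := by
    rw [reidx (fun σ => p σ * g (σ z))]
    exact Finset.sum_congr rfl fun σ _ => by rw [Equiv.Perm.mul_apply, hsz]
  have h2 : (∑ σ : Equiv.Perm (Fin m), p σ * g (σ k))
      = ∑ σ : Equiv.Perm (Fin m), p (σ * s) * g (σ z) := by
    rw [reidx (fun σ => p σ * g (σ k))]
    exact Finset.sum_congr rfl fun σ _ => by rw [Equiv.Perm.mul_apply, hsk]
  have key : ∀ σ : Equiv.Perm (Fin m),
      0 ≤ (p σ - p (σ * s)) * (g (σ z) - g (σ k)) := by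
    intro σ
    rcases le_total (w (σ z)) (w (σ k)) with hle | hle
    · have hple : p σ ≤ p (σ * s) := sbop_swap_ge w hm hw k σ hle
      have hgle : g (σ z) ≤ g (σ k) := hg _ _ hle
      nlinarith
    · have hple : p (σ * s) ≤ p σ := by
        have hwle : w ((σ * s) ⟨0, hm⟩) ≤ w ((σ * s) k) := by
          rw [Equiv.Perm.mul_apply, Equiv.Perm.mul_apply, ← hz, hsz, hsk]
          exact hle
        have := sbop_swap_ge w hm hw k (σ * s) hwle
        rwa [← hs, mul_assoc, hss, mul_one] at this
      have hgle : g (σ k) ≤ g (σ z) := hg _ _ hle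
      nlinarith
  have hC : 0 ≤ ∑ σ : Equiv.Perm (Fin m), (p σ - p (σ * s)) * (g (σ z) - g (σ k)) :=
    Finset.sum_nonneg fun σ _ => key σ
  have expand : (∑ σ : Equiv.Perm (Fin m), (p σ - p (σ * s)) * (g (σ z) - g (σ k)))
      = (∑ σ : Equiv.Perm (Fin m), p σ * g (σ z))
        - (∑ σ : Equiv.Perm (Fin m), p σ * g (σ k))
        - (∑ σ : Equiv.Perm (Fin m), p (σ * s) * g (σ z))
        + ∑ σ : Equiv.Perm (Fin m), p (σ * s) * g (σ k) := by
    rw [← Finset.sum_sub_distrib, ← Finset.sum_sub_distrib, ← Finset.sum_add_distrib]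
    exact Finset.sum_congr rfl fun σ _ => by ring
  rw [expand, h1, h2] at hC
  linarith

end Aux

/-- In a size-biased random ordering with strictly positive weights, the weight of the `k`-th
chosen element is stochastically dominated by the weight of the first chosen element; in
particular its expectation is no larger. -/
theorem size_biased_order_stochastic_domination {m : ℕ} (hm : 0 < m)
    (w : Fin m → ℝ) (hw : ∀ i, 0 < w i) (k : Fin m) :
    (∀ x : ℝ,
      ∑ σ ∈ Finset.univ.filter (fun σ : Equiv.Perm (Fin m) => x < w (σ k)),
          sizeBiasedOrderProb w σ
        ≤ ∑ σ ∈ Finset.univ.filter (fun σ : Equiv.Perm (Fin m) => x < w (σ ⟨0, hm⟩)),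
            sizeBiasedOrderProb w σ) ∧
    ∑ σ : Equiv.Perm (Fin m), sizeBiasedOrderProb w σ * w (σ k)
      ≤ ∑ σ : Equiv.Perm (Fin m), sizeBiasedOrderProb w σ * w (σ ⟨0, hm⟩) := by
  constructor
  · intro x
    set g : Fin m → ℝ := fun i => if x < w i then 1 else 0 with hgdef
    have hg : ∀ i j : Fin m, w i ≤ w j → g i ≤ g j := by
      intro i j hij
      simp only [hgdef]
      by_cases h1 : x < w i
      · have h2 : x < w j := lt_of_lt_of_le h1 hij
        simp [h1, h2]
      · by_cases h2 : x < w j <;> simp [h1, h2]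
    have conv : ∀ c : Fin m,
        (∑ σ ∈ Finset.univ.filter (fun σ : Equiv.Perm (Fin m) => x < w (σ c)),
          sizeBiasedOrderProb w σ)
        = ∑ σ : Equiv.Perm (Fin m), sizeBiasedOrderProb w σ * g (σ c) := by
      intro c
      rw [Finset.sum_filter]
      refine Finset.sum_congr rfl fun σ _ => ?_
      simp only [hgdef]
      split <;> simp
    rw [conv k, conv ⟨0, hm⟩]
    exact sbop_mono w hm hw k g hg
  · exact sbop_mono w hm hw k w (fun i j h => h)
end

section
/- Let G₀ ⊂ G₁ be two finite graphs on vertex sets V⁻ = [n]\{1} and V = [n] respectively, where G₁ is an inhomogeneous random graph (each pair i ≠ j connected independently with probability min(1, κ̄(x_i,x_j)/n), types x_i ∈ [K]) and G₀ is the induced subgraph on V⁻. Let D(G) = Σ_{i,j ∈ V(G)} d(i,j)·1{d(i,j)<∞} and S₂(G) = Σ_{components C} |C|². Set A = max_{x,y} κ̄(x,y). Then E[D(G₀)] ≤ E[D(G₁)] + (A²/(2n²))·E[D(G₀)·S₂(G₀)]. -/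
open MeasureTheory ProbabilityTheory
open scoped ENNReal Classical

/-- `Σ_{i,j ∈ S} d(i,j) 𝟙{d(i,j) < ∞}` for a graph `G` (graph distances; pairs in distinct
components contribute `0`). -/
noncomputable def graphDistSum {n : ℕ} (G : SimpleGraph (Fin n)) (S : Finset (Fin n)) : ℝ :=
  ∑ i ∈ S, ∑ j ∈ S, if G.Reachable i j then (G.dist i j : ℝ) else 0

/-- `Σ_{components C} |C|² = Σ_{i,j ∈ S} 𝟙{i and j are connected}` for a graph `G`. -/
noncomputable def compSqSum {n : ℕ} (G : SimpleGraph (Fin n)) (S : Finset (Fin n)) : ℝ :=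
  ∑ i ∈ S, ∑ j ∈ S, if G.Reachable i j then (1 : ℝ) else 0

namespace IRGAux

variable {n : ℕ}

lemma gds_nonneg (G : SimpleGraph (Fin n)) (S : Finset (Fin n)) : 0 ≤ graphDistSum G S := by
  refine Finset.sum_nonneg fun i _ => Finset.sum_nonneg fun j _ => ?_
  split <;> positivity

lemma css_nonneg (G : SimpleGraph (Fin n)) (S : Finset (Fin n)) : 0 ≤ compSqSum G S := by
  refine Finset.sum_nonneg fun i _ => Finset.sum_nonneg fun j _ => ?_
  split <;> positivity

/-- Deterministic key lemma: if the removed vertex `v₀` does not have two neighbours (in `H₁`)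
inside a common component of `H₀`, then distances do not decrease upon removal. -/
lemma dist_le_of_noBad {H₀ H₁ : SimpleGraph (Fin n)} {v₀ : Fin n}
    (hsub : ∀ a b, H₀.Adj a b ↔ H₁.Adj a b ∧ a ≠ v₀ ∧ b ≠ v₀)
    (noBad : ∀ a b, a ≠ b → H₀.Reachable a b → ¬(H₁.Adj v₀ a ∧ H₁.Adj v₀ b))
    {i j : Fin n} (hi : i ≠ v₀) (hj : j ≠ v₀) (hr : H₀.Reachable i j) :
    H₀.dist i j ≤ H₁.dist i j := by
  have hmono : H₀ ≤ H₁ := fun a b hab => ((hsub a b).1 hab).1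
  have hr1 : H₁.Reachable i j := hr.mono hmono
  obtain ⟨w, hw⟩ := hr1.exists_walk_length_eq_dist
  have hp : w.bypass.IsPath := w.bypass_isPath
  set p := w.bypass with hpdef
  have hlen : p.length ≤ H₁.dist i j := hw ▸ w.length_bypass_le
  -- transfer of a walk avoiding v₀
  have htrans : ∀ {c d : Fin n} (r : H₁.Walk c d), v₀ ∉ r.support →
      ∃ r' : H₀.Walk c d, r'.length = r.length := by
    intro c d r hns
    have hedges : ∀ e ∈ r.edges, e ∈ H₀.edgeSet := by
      intro e he
      induction e with
      | h a b =>
        have hab : H₁.Adj a b := r.adj_of_mem_edges he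
        have ha : a ∈ r.support := r.fst_mem_support_of_mem_edges he
        have hb : b ∈ r.support := r.snd_mem_support_of_mem_edges he
        rw [SimpleGraph.mem_edgeSet, hsub]
        exact ⟨hab, fun h => hns (h ▸ ha), fun h => hns (h ▸ hb)⟩
    exact ⟨r.transfer H₀ hedges, r.length_transfer hedges⟩
  by_cases hv : v₀ ∈ p.support
  · exfalso
    -- decompose the path at v₀
    have hqpath : (p.takeUntil v₀ hv).IsPath := hp.takeUntil hv
    have hrpath : (p.dropUntil v₀ hv).IsPath := hp.dropUntil hv
    obtain ⟨b, hbadj, r', hreq⟩ :=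
      SimpleGraph.Walk.exists_eq_cons_of_ne (Ne.symm hj) (p.dropUntil v₀ hv)
    have hrpath' : (SimpleGraph.Walk.cons hbadj r').IsPath := hreq ▸ hrpath
    rw [SimpleGraph.Walk.cons_isPath_iff] at hrpath'
    obtain ⟨hr'path, hv0r'⟩ := hrpath'
    have hqrev : (p.takeUntil v₀ hv).reverse.IsPath := hqpath.reverse
    obtain ⟨a, haadj, q', hqeq⟩ :=
      SimpleGraph.Walk.exists_eq_cons_of_ne (Ne.symm hi) (p.takeUntil v₀ hv).reverse
    have hqpath' : (SimpleGraph.Walk.cons haadj q').IsPath := hqeq ▸ hqrev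
    rw [SimpleGraph.Walk.cons_isPath_iff] at hqpath'
    obtain ⟨hq'path, hv0q'⟩ := hqpath'
    -- reachability in H₀
    obtain ⟨ra, _⟩ := htrans q' hv0q'
    obtain ⟨rb, _⟩ := htrans r' hv0r'
    have hreach_ai : H₀.Reachable a i := ⟨ra⟩
    have hreach_bj : H₀.Reachable b j := ⟨rb⟩
    have hreach_ab : H₀.Reachable a b := (hreach_ai.trans hr).trans hreach_bj.symm
    -- a ≠ b via nodup of p.support
    have hnd : ((p.takeUntil v₀ hv).support ++ (p.dropUntil v₀ hv).support.tail).Nodup := by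
      rw [← SimpleGraph.Walk.support_append, SimpleGraph.Walk.take_spec]
      exact hp.support_nodup
    have hamem : a ∈ (p.takeUntil v₀ hv).support := by
      have : a ∈ (p.takeUntil v₀ hv).reverse.support := by
        rw [hqeq]
        simp [SimpleGraph.Walk.support_cons, SimpleGraph.Walk.start_mem_support]
      rwa [SimpleGraph.Walk.support_reverse, List.mem_reverse] at this
    have hbmem : b ∈ (p.dropUntil v₀ hv).support.tail := by
      rw [hreq, SimpleGraph.Walk.support_cons]
      exact r'.start_mem_support
    have hab : a ≠ b := by
      intro h
      exact (List.nodup_append'.mp hnd).2.2 hamem (h ▸ hbmem)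
    exact noBad a b hab hreach_ab ⟨haadj, hbadj⟩
  · obtain ⟨p', hp'⟩ := htrans p hv
    calc H₀.dist i j ≤ p'.length := SimpleGraph.dist_le p'
      _ = p.length := hp'
      _ ≤ H₁.dist i j := hlen

lemma gds_le_of_noBad {H₀ H₁ : SimpleGraph (Fin n)} {v₀ : Fin n}
    (hsub : ∀ a b, H₀.Adj a b ↔ H₁.Adj a b ∧ a ≠ v₀ ∧ b ≠ v₀)
    (noBad : ∀ a b, a ≠ b → H₀.Reachable a b → ¬(H₁.Adj v₀ a ∧ H₁.Adj v₀ b)) :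
    graphDistSum H₀ (Finset.univ.erase v₀) ≤ graphDistSum H₁ Finset.univ := by
  unfold graphDistSum
  have hterm : ∀ (G : SimpleGraph (Fin n)) (a b : Fin n),
      0 ≤ if G.Reachable a b then (G.dist a b : ℝ) else 0 := by
    intro G a b; split <;> positivity
  refine le_trans (Finset.sum_le_sum ?_) (Finset.sum_le_sum_of_subset_of_nonneg
    (Finset.erase_subset _ _) (fun i _ _ => Finset.sum_nonneg fun j _ => hterm _ _ _))
  intro i hiS
  refine le_trans (Finset.sum_le_sum ?_) (Finset.sum_le_sum_of_subset_of_nonneg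
    (Finset.erase_subset _ _) (fun j _ _ => hterm _ _ _))
  intro j hjS
  have hi : i ≠ v₀ := Finset.ne_of_mem_erase hiS
  have hj : j ≠ v₀ := Finset.ne_of_mem_erase hjS
  by_cases hr : H₀.Reachable i j
  · have hr1 : H₁.Reachable i j := hr.mono (fun a b hab => ((hsub a b).1 hab).1)
    simp only [hr, hr1, if_true]
    exact_mod_cast dist_le_of_noBad hsub noBad hi hj hr
  · simp only [hr, if_false]
    exact hterm _ _ _

/-- The graph on `Fin n` determined by an edge-indicator function. -/
def g1 (f : Sym2 (Fin n) → Bool) : SimpleGraph (Fin n) :=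
  SimpleGraph.fromRel (fun i j => f s(i, j) = true)

/-- The graph on `Fin n` determined by an edge-indicator function, with `v₀` isolated. -/
def g0 (v₀ : Fin n) (f : Sym2 (Fin n) → Bool) : SimpleGraph (Fin n) :=
  SimpleGraph.fromRel (fun i j => i ≠ v₀ ∧ j ≠ v₀ ∧ f s(i, j) = true)

lemma g1_adj (f : Sym2 (Fin n) → Bool) (i j : Fin n) :
    (g1 f).Adj i j ↔ i ≠ j ∧ f s(i, j) = true := by
  rw [g1, SimpleGraph.fromRel_adj]
  have h : s(j, i) = s(i, j) := Sym2.eq_swap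
  rw [h]
  tauto

lemma g0_adj (v₀ : Fin n) (f : Sym2 (Fin n) → Bool) (i j : Fin n) :
    (g0 v₀ f).Adj i j ↔ i ≠ j ∧ i ≠ v₀ ∧ j ≠ v₀ ∧ f s(i, j) = true := by
  rw [g0, SimpleGraph.fromRel_adj]
  have h : s(j, i) = s(i, j) := Sym2.eq_swap
  rw [h]
  tauto

/-- Extend a partial edge-indicator (on a set of edges `E₀`) by `false`. -/
noncomputable def ext0 (E₀ : Finset (Sym2 (Fin n)))
    (h : {e // e ∈ E₀} → Bool) : Sym2 (Fin n) → Bool :=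
  fun e => if he : e ∈ E₀ then h ⟨e, he⟩ else false

lemma g0_ext0 (v₀ : Fin n) (E₀ : Finset (Sym2 (Fin n)))
    (hE : ∀ a b : Fin n, a ≠ v₀ → b ≠ v₀ → s(a, b) ∈ E₀) (f : Sym2 (Fin n) → Bool) :
    g0 v₀ (ext0 E₀ (fun e => f e.1)) = g0 v₀ f := by
  ext i j
  rw [g0_adj, g0_adj]
  constructor
  · rintro ⟨h1, h2, h3, h4⟩
    refine ⟨h1, h2, h3, ?_⟩
    rwa [ext0, dif_pos (hE i j h2 h3)] at h4
  · rintro ⟨h1, h2, h3, h4⟩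
    refine ⟨h1, h2, h3, ?_⟩
    rwa [ext0, dif_pos (hE i j h2 h3)]

/-- Weight of a pair `(i,j)`: indicator of reachability in `g0 v₀ f` times the distance sum. -/
noncomputable def gfun (v₀ i j : Fin n) (S : Finset (Fin n)) (f : Sym2 (Fin n) → Bool) : ℝ≥0∞ :=
  (if (g0 v₀ f).Reachable i j then 1 else 0) * ENNReal.ofReal (graphDistSum (g0 v₀ f) S)

/-- Indicator that both edges `s(v₀,i)` and `s(v₀,j)` are present. -/
noncomputable def chi (v₀ i j : Fin n) (f : Sym2 (Fin n) → Bool) : ℝ≥0∞ :=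
  if (f s(v₀, i) = true ∧ f s(v₀, j) = true) then 1 else 0

end IRGAux

/-- Monotonicity of expected distances for the inhomogeneous random graph. -/
theorem irg_expected_distance_monotonicity {n K : ℕ} (hn : 2 ≤ n) (hK : 0 < K)
    (κ : Fin K → Fin K → ℝ) (hκ : ∀ a b, 0 ≤ κ a b) (hκsymm : ∀ a b, κ a b = κ b a)
    (x : Fin n → Fin K) (A : ℝ) (hA : A = ⨆ a, ⨆ b, κ a b)
    {Ω : Type} [MeasurableSpace Ω] (P : Measure Ω) [IsProbabilityMeasure P]
    (X : Sym2 (Fin n) → Ω → Bool) (hmeas : ∀ e, Measurable (X e))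
    (hindep : iIndepFun X P)
    (hlaw : ∀ i j : Fin n, i ≠ j →
      P {ω | X s(i, j) ω = true} = ENNReal.ofReal (min 1 (κ (x i) (x j) / n)))
    (G₁ G₀ : Ω → SimpleGraph (Fin n)) (v₀ : Fin n)
    (hG₁ : ∀ ω i j, (G₁ ω).Adj i j ↔ (i ≠ j ∧ X s(i, j) ω = true))
    (hG₀ : ∀ ω i j, (G₀ ω).Adj i j ↔ ((G₁ ω).Adj i j ∧ i ≠ v₀ ∧ j ≠ v₀)) :
    ∫⁻ ω, ENNReal.ofReal (graphDistSum (G₀ ω) (Finset.univ.erase v₀)) ∂P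
      ≤ ∫⁻ ω, ENNReal.ofReal (graphDistSum (G₁ ω) Finset.univ) ∂P
        + ENNReal.ofReal (A ^ 2 / (2 * (n : ℝ) ^ 2)) *
            ∫⁻ ω, ENNReal.ofReal
              (graphDistSum (G₀ ω) (Finset.univ.erase v₀) *
                compSqSum (G₀ ω) (Finset.univ.erase v₀)) ∂P := by
  classical
  set S : Finset (Fin n) := Finset.univ.erase v₀ with hS
  have hG1eq : ∀ ω, G₁ ω = IRGAux.g1 (fun e => X e ω) := by
    intro ω; ext i j; rw [hG₁, IRGAux.g1_adj]
  have hG0eq : ∀ ω, G₀ ω = IRGAux.g0 v₀ (fun e => X e ω) := by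
    intro ω; ext i j; rw [hG₀, hG₁, IRGAux.g0_adj]; tauto
  -- measurability of any functional of the edge indicators
  have hmeasφ : ∀ (φ : (Sym2 (Fin n) → Bool) → ℝ≥0∞),
      Measurable fun ω => φ (fun e => X e ω) :=
    fun φ => (measurable_of_countable φ).comp (measurable_pi_lambda _ hmeas)
  simp only [hG0eq, hG1eq]
  -- the pointwise master inequality
  have key : ∀ ω, ENNReal.ofReal (graphDistSum (IRGAux.g0 v₀ (fun e => X e ω)) S)
      ≤ ENNReal.ofReal (graphDistSum (IRGAux.g1 (fun e => X e ω)) Finset.univ)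
        + 2⁻¹ * ∑ i ∈ S, ∑ j ∈ S.erase i,
            IRGAux.gfun v₀ i j S (fun e => X e ω) * IRGAux.chi v₀ i j (fun e => X e ω) := by
    intro ω
    by_cases hbad : ∃ i, i ∈ S ∧ ∃ j, j ∈ S.erase i ∧
        (IRGAux.g0 v₀ (fun e => X e ω)).Reachable i j ∧
        X s(v₀, i) ω = true ∧ X s(v₀, j) ω = true
    · obtain ⟨i, hi, j, hj, hreach, hx1, hx2⟩ := hbad
      have hij : j ≠ i := Finset.ne_of_mem_erase hj
      have hjS : j ∈ S := Finset.mem_of_mem_erase hj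
      have hji : i ∈ S.erase j := Finset.mem_erase.mpr ⟨hij.symm, hi⟩
      set d : ℝ≥0∞ := ENNReal.ofReal (graphDistSum (IRGAux.g0 v₀ (fun e => X e ω)) S) with hd
      have hterm1 : IRGAux.gfun v₀ i j S (fun e => X e ω) *
          IRGAux.chi v₀ i j (fun e => X e ω) = d := by
        simp [IRGAux.gfun, IRGAux.chi, hreach, hx1, hx2, hd]
      have hterm2 : IRGAux.gfun v₀ j i S (fun e => X e ω) *
          IRGAux.chi v₀ j i (fun e => X e ω) = d := by
        simp [IRGAux.gfun, IRGAux.chi, hreach.symm, hx1, hx2, hd]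
      have h1 : IRGAux.gfun v₀ i j S (fun e => X e ω) * IRGAux.chi v₀ i j (fun e => X e ω)
          ≤ ∑ k ∈ S.erase i,
              IRGAux.gfun v₀ i k S (fun e => X e ω) * IRGAux.chi v₀ i k (fun e => X e ω) :=
        Finset.single_le_sum
          (f := fun k => IRGAux.gfun v₀ i k S (fun e => X e ω) *
            IRGAux.chi v₀ i k (fun e => X e ω))
          (fun _ _ => zero_le) hj
      have h2 : IRGAux.gfun v₀ j i S (fun e => X e ω) * IRGAux.chi v₀ j i (fun e => X e ω)
          ≤ ∑ k ∈ S.erase j,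
              IRGAux.gfun v₀ j k S (fun e => X e ω) * IRGAux.chi v₀ j k (fun e => X e ω) :=
        Finset.single_le_sum
          (f := fun k => IRGAux.gfun v₀ j k S (fun e => X e ω) *
            IRGAux.chi v₀ j k (fun e => X e ω))
          (fun _ _ => zero_le) hji
      have h4 : (∑ k ∈ S.erase j,
              IRGAux.gfun v₀ j k S (fun e => X e ω) * IRGAux.chi v₀ j k (fun e => X e ω))
          ≤ ∑ a ∈ S.erase i, ∑ k ∈ S.erase a,
              IRGAux.gfun v₀ a k S (fun e => X e ω) * IRGAux.chi v₀ a k (fun e => X e ω) :=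
        Finset.single_le_sum
          (f := fun a => ∑ k ∈ S.erase a,
            IRGAux.gfun v₀ a k S (fun e => X e ω) * IRGAux.chi v₀ a k (fun e => X e ω))
          (fun _ _ => zero_le) hj
      have h3 : d + d ≤ ∑ a ∈ S, ∑ k ∈ S.erase a,
          IRGAux.gfun v₀ a k S (fun e => X e ω) * IRGAux.chi v₀ a k (fun e => X e ω) := by
        calc d + d = IRGAux.gfun v₀ i j S (fun e => X e ω) * IRGAux.chi v₀ i j (fun e => X e ω)
              + IRGAux.gfun v₀ j i S (fun e => X e ω) * IRGAux.chi v₀ j i (fun e => X e ω) := by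
              rw [hterm1, hterm2]
          _ ≤ (∑ k ∈ S.erase i,
                IRGAux.gfun v₀ i k S (fun e => X e ω) * IRGAux.chi v₀ i k (fun e => X e ω))
              + ∑ a ∈ S.erase i, ∑ k ∈ S.erase a,
                IRGAux.gfun v₀ a k S (fun e => X e ω) * IRGAux.chi v₀ a k (fun e => X e ω) :=
              add_le_add h1 (h2.trans h4)
          _ = _ := Finset.add_sum_erase S
              (fun a => ∑ k ∈ S.erase a,
                IRGAux.gfun v₀ a k S (fun e => X e ω) * IRGAux.chi v₀ a k (fun e => X e ω)) hi
      calc d ≤ 2⁻¹ * (d + d) := by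
            rw [← two_mul, ← mul_assoc, ENNReal.inv_mul_cancel two_ne_zero ENNReal.ofNat_ne_top,
              one_mul]
        _ ≤ 2⁻¹ * ∑ a ∈ S, ∑ k ∈ S.erase a,
              IRGAux.gfun v₀ a k S (fun e => X e ω) * IRGAux.chi v₀ a k (fun e => X e ω) := by
            exact mul_le_mul_right h3 _
        _ ≤ _ := le_add_self
    · push_neg at hbad
      have hle : graphDistSum (IRGAux.g0 v₀ (fun e => X e ω)) S
          ≤ graphDistSum (IRGAux.g1 (fun e => X e ω)) Finset.univ := by
        rw [hS]
        apply IRGAux.gds_le_of_noBad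
        · intro a b; rw [IRGAux.g0_adj, IRGAux.g1_adj]; tauto
        · rintro a b hab hreach ⟨ha, hb⟩
          rw [IRGAux.g1_adj] at ha hb
          have haS : a ∈ S := Finset.mem_erase.mpr ⟨Ne.symm ha.1, Finset.mem_univ a⟩
          have hbS : b ∈ S.erase a :=
            Finset.mem_erase.mpr ⟨Ne.symm hab, Finset.mem_erase.mpr ⟨Ne.symm hb.1,
              Finset.mem_univ b⟩⟩
          exact hbad a haS b hbS hreach ha.2 hb.2
      exact le_trans (ENNReal.ofReal_le_ofReal hle) le_self_add
  -- numeric facts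
  have hn0 : (0:ℝ) < n := by
    have : (0:ℕ) < n := lt_of_lt_of_le (by norm_num) hn
    exact_mod_cast this
  have hκA : ∀ a b, κ a b ≤ A := by
    intro a b
    rw [hA]
    have h1 : κ a b ≤ ⨆ c, κ a c :=
      le_ciSup (Set.Finite.bddAbove (Set.finite_range _)) b
    exact h1.trans (le_ciSup (f := fun a => ⨆ c, κ a c)
      (Set.Finite.bddAbove (Set.finite_range _)) a)
  have hA0 : 0 ≤ A := le_trans (hκ ⟨0, hK⟩ ⟨0, hK⟩) (hκA _ _)
  -- the per-pair independence bound
  have pair : ∀ i ∈ S, ∀ j ∈ S.erase i,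
      (∫⁻ ω, IRGAux.gfun v₀ i j S (fun e => X e ω) * IRGAux.chi v₀ i j (fun e => X e ω) ∂P)
        ≤ ENNReal.ofReal (A ^ 2 / (n:ℝ) ^ 2) *
            ∫⁻ ω, IRGAux.gfun v₀ i j S (fun e => X e ω) ∂P := by
    intro i hi j hj
    have hiv : i ≠ v₀ := Finset.ne_of_mem_erase hi
    have hjv : j ≠ v₀ := Finset.ne_of_mem_erase (Finset.mem_of_mem_erase hj)
    have hij : j ≠ i := Finset.ne_of_mem_erase hj
    have hee : s(v₀, i) ≠ s(v₀, j) := by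
      intro h
      rw [Sym2.eq_iff] at h
      rcases h with ⟨-, h⟩ | ⟨h1, h2⟩
      · exact hij h.symm
      · exact hiv h2
    set E₀ : Finset (Sym2 (Fin n)) := Finset.univ.filter (fun e => v₀ ∉ e) with hE₀
    set T : Finset (Sym2 (Fin n)) := {s(v₀, i), s(v₀, j)} with hT
    have he₁T : s(v₀, i) ∈ T := by rw [hT]; simp
    have he₂T : s(v₀, j) ∈ T := by rw [hT]; simp
    have hdisj : Disjoint E₀ T := by
      rw [Finset.disjoint_right]
      intro e he hmem
      rw [hE₀, Finset.mem_filter] at hmem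
      rw [hT, Finset.mem_insert, Finset.mem_singleton] at he
      rcases he with rfl | rfl
      · exact hmem.2 (by simp)
      · exact hmem.2 (by simp)
    have hIndep0 := hindep.indepFun_finset E₀ T hdisj hmeas
    set Φ : ({e // e ∈ E₀} → Bool) → ℝ≥0∞ :=
      fun h => IRGAux.gfun v₀ i j S (IRGAux.ext0 E₀ h) with hΦ
    set Ψ : ({e // e ∈ T} → Bool) → ℝ≥0∞ :=
      fun h => if (h ⟨s(v₀, i), he₁T⟩ = true ∧ h ⟨s(v₀, j), he₂T⟩ = true) then 1 else 0 with hΨ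
    have hE : ∀ a b : Fin n, a ≠ v₀ → b ≠ v₀ → s(a, b) ∈ E₀ := by
      intro a b ha hb
      rw [hE₀, Finset.mem_filter]
      refine ⟨Finset.mem_univ _, ?_⟩
      rw [Sym2.mem_iff]
      push_neg
      exact ⟨Ne.symm ha, Ne.symm hb⟩
    have hgf : (fun ω => IRGAux.gfun v₀ i j S (fun e => X e ω))
        = fun ω => Φ (fun e : {e // e ∈ E₀} => X e.1 ω) := by
      funext ω
      have hg := IRGAux.g0_ext0 v₀ E₀ hE (fun e => X e ω)
      simp only [hΦ, IRGAux.gfun]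
      rw [hg]
    have hch : (fun ω => IRGAux.chi v₀ i j (fun e => X e ω))
        = fun ω => Ψ (fun e : {e // e ∈ T} => X e.1 ω) := by
      funext ω
      simp only [hΨ, IRGAux.chi]
    have hindep2 : IndepFun (fun ω => IRGAux.gfun v₀ i j S (fun e => X e ω))
        (fun ω => IRGAux.chi v₀ i j (fun e => X e ω)) P := by
      rw [hgf, hch]
      exact hIndep0.comp (measurable_of_countable Φ) (measurable_of_countable Ψ)
    have hmul := lintegral_mul_eq_lintegral_mul_lintegral_of_indepFun
      (hmeasφ (IRGAux.gfun v₀ i j S)) (hmeasφ (IRGAux.chi v₀ i j)) hindep2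
    have hA1 : MeasurableSet {ω | X s(v₀, i) ω = true} :=
      (hmeas _) (measurableSet_singleton true)
    have hA2 : MeasurableSet {ω | X s(v₀, j) ω = true} :=
      (hmeas _) (measurableSet_singleton true)
    have hchval : (∫⁻ ω, IRGAux.chi v₀ i j (fun e => X e ω) ∂P)
        = P {ω | X s(v₀, i) ω = true} * P {ω | X s(v₀, j) ω = true} := by
      have hiden : (fun ω => IRGAux.chi v₀ i j (fun e => X e ω))
          = Set.indicator ({ω | X s(v₀, i) ω = true} ∩ {ω | X s(v₀, j) ω = true})
              (1 : Ω → ℝ≥0∞) := by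
        funext ω
        by_cases h : X s(v₀, i) ω = true ∧ X s(v₀, j) ω = true <;>
          simp [IRGAux.chi, h, Set.indicator_apply, Set.mem_inter_iff, Set.mem_setOf_eq]
      rw [hiden, lintegral_indicator_one (hA1.inter hA2)]
      exact (hindep.indepFun hee).measure_inter_preimage_eq_mul
        (s := {true}) (t := {true}) (measurableSet_singleton true)
        (measurableSet_singleton true)
    have hb1 : P {ω | X s(v₀, i) ω = true} ≤ ENNReal.ofReal (A / n) := by
      rw [hlaw v₀ i (Ne.symm hiv)]
      apply ENNReal.ofReal_le_ofReal
      refine le_trans (min_le_right _ _) ?_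
      gcongr
      exact hκA _ _
    have hb2 : P {ω | X s(v₀, j) ω = true} ≤ ENNReal.ofReal (A / n) := by
      rw [hlaw v₀ j (Ne.symm hjv)]
      apply ENNReal.ofReal_le_ofReal
      refine le_trans (min_le_right _ _) ?_
      gcongr
      exact hκA _ _
    have hprod : P {ω | X s(v₀, i) ω = true} * P {ω | X s(v₀, j) ω = true}
        ≤ ENNReal.ofReal (A ^ 2 / (n:ℝ) ^ 2) := by
      calc P {ω | X s(v₀, i) ω = true} * P {ω | X s(v₀, j) ω = true}
          ≤ ENNReal.ofReal (A / n) * ENNReal.ofReal (A / n) := mul_le_mul' hb1 hb2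
        _ = ENNReal.ofReal (A / n * (A / n)) := (ENNReal.ofReal_mul (by positivity)).symm
        _ = ENNReal.ofReal (A ^ 2 / (n:ℝ) ^ 2) := by congr 1; ring
    calc (∫⁻ ω, IRGAux.gfun v₀ i j S (fun e => X e ω) * IRGAux.chi v₀ i j (fun e => X e ω) ∂P)
        = (∫⁻ ω, IRGAux.gfun v₀ i j S (fun e => X e ω) ∂P) *
            ∫⁻ ω, IRGAux.chi v₀ i j (fun e => X e ω) ∂P := hmul
      _ ≤ (∫⁻ ω, IRGAux.gfun v₀ i j S (fun e => X e ω) ∂P) *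
            ENNReal.ofReal (A ^ 2 / (n:ℝ) ^ 2) := by
          rw [hchval]; exact mul_le_mul_right hprod _
      _ = ENNReal.ofReal (A ^ 2 / (n:ℝ) ^ 2) *
            ∫⁻ ω, IRGAux.gfun v₀ i j S (fun e => X e ω) ∂P := mul_comm _ _
  -- pointwise bound on the sum of gfun by D·S₂
  have sumbound : ∀ ω, (∑ i ∈ S, ∑ j ∈ S.erase i, IRGAux.gfun v₀ i j S (fun e => X e ω))
      ≤ ENNReal.ofReal (graphDistSum (IRGAux.g0 v₀ (fun e => X e ω)) S *
          compSqSum (IRGAux.g0 v₀ (fun e => X e ω)) S) := by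
    intro ω
    have hd0 : 0 ≤ graphDistSum (IRGAux.g0 v₀ (fun e => X e ω)) S := IRGAux.gds_nonneg _ _
    have hrepr : ∀ i j : Fin n, IRGAux.gfun v₀ i j S (fun e => X e ω)
        = ENNReal.ofReal ((if (IRGAux.g0 v₀ (fun e => X e ω)).Reachable i j then (1:ℝ) else 0)
            * graphDistSum (IRGAux.g0 v₀ (fun e => X e ω)) S) := by
      intro i j
      by_cases h : (IRGAux.g0 v₀ (fun e => X e ω)).Reachable i j <;>
        simp [IRGAux.gfun, h]
    simp only [hrepr]
    have hnn : ∀ (c : Prop) [Decidable c],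
        0 ≤ (if c then (1:ℝ) else 0) * graphDistSum (IRGAux.g0 v₀ (fun e => X e ω)) S := by
      intro c _
      exact mul_nonneg (by split <;> norm_num) hd0
    have h1 : ∀ i : Fin n, (∑ j ∈ S.erase i,
          ENNReal.ofReal ((if (IRGAux.g0 v₀ (fun e => X e ω)).Reachable i j then (1:ℝ) else 0)
            * graphDistSum (IRGAux.g0 v₀ (fun e => X e ω)) S))
        = ENNReal.ofReal (∑ j ∈ S.erase i,
            (if (IRGAux.g0 v₀ (fun e => X e ω)).Reachable i j then (1:ℝ) else 0)
              * graphDistSum (IRGAux.g0 v₀ (fun e => X e ω)) S) := by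
      intro i
      exact (ENNReal.ofReal_sum_of_nonneg (fun j _ => hnn _)).symm
    simp only [h1]
    rw [← ENNReal.ofReal_sum_of_nonneg
      (fun i _ => Finset.sum_nonneg (fun j _ => hnn _))]
    apply ENNReal.ofReal_le_ofReal
    have h2 : (∑ i ∈ S, ∑ j ∈ S.erase i,
          (if (IRGAux.g0 v₀ (fun e => X e ω)).Reachable i j then (1:ℝ) else 0))
        ≤ compSqSum (IRGAux.g0 v₀ (fun e => X e ω)) S := by
      unfold compSqSum
      refine Finset.sum_le_sum fun i _ => Finset.sum_le_sum_of_subset_of_nonneg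
        (Finset.erase_subset _ _) (fun j _ _ => by split <;> norm_num)
    calc (∑ i ∈ S, ∑ j ∈ S.erase i,
          (if (IRGAux.g0 v₀ (fun e => X e ω)).Reachable i j then (1:ℝ) else 0)
            * graphDistSum (IRGAux.g0 v₀ (fun e => X e ω)) S)
        = (∑ i ∈ S, ∑ j ∈ S.erase i,
            (if (IRGAux.g0 v₀ (fun e => X e ω)).Reachable i j then (1:ℝ) else 0))
            * graphDistSum (IRGAux.g0 v₀ (fun e => X e ω)) S := by
          simp only [← Finset.sum_mul]
      _ ≤ compSqSum (IRGAux.g0 v₀ (fun e => X e ω)) S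
            * graphDistSum (IRGAux.g0 v₀ (fun e => X e ω)) S :=
          mul_le_mul_of_nonneg_right h2 hd0
      _ = graphDistSum (IRGAux.g0 v₀ (fun e => X e ω)) S
            * compSqSum (IRGAux.g0 v₀ (fun e => X e ω)) S := mul_comm _ _
  -- measurability facts
  have hmeasd1 : Measurable fun ω =>
      ENNReal.ofReal (graphDistSum (IRGAux.g1 (fun e => X e ω)) Finset.univ) :=
    hmeasφ (fun f => ENNReal.ofReal (graphDistSum (IRGAux.g1 f) Finset.univ))
  have hmeasinner : ∀ i : Fin n, Measurable fun ω => ∑ j ∈ S.erase i,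
      IRGAux.gfun v₀ i j S (fun e => X e ω) * IRGAux.chi v₀ i j (fun e => X e ω) :=
    fun i => hmeasφ (fun f => ∑ j ∈ S.erase i, IRGAux.gfun v₀ i j S f * IRGAux.chi v₀ i j f)
  have hmeassum : Measurable fun ω => ∑ i ∈ S, ∑ j ∈ S.erase i,
      IRGAux.gfun v₀ i j S (fun e => X e ω) * IRGAux.chi v₀ i j (fun e => X e ω) :=
    hmeasφ (fun f => ∑ i ∈ S, ∑ j ∈ S.erase i, IRGAux.gfun v₀ i j S f * IRGAux.chi v₀ i j f)
  have hswap : (∫⁻ ω, (∑ i ∈ S, ∑ j ∈ S.erase i,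
        IRGAux.gfun v₀ i j S (fun e => X e ω)) ∂P)
      = ∑ i ∈ S, ∑ j ∈ S.erase i, ∫⁻ ω, IRGAux.gfun v₀ i j S (fun e => X e ω) ∂P := by
    rw [lintegral_finset_sum _
      (fun i _ => hmeasφ (fun f => ∑ j ∈ S.erase i, IRGAux.gfun v₀ i j S f))]
    exact Finset.sum_congr rfl fun i _ =>
      lintegral_finset_sum _ (fun j _ => hmeasφ (IRGAux.gfun v₀ i j S))
  have hconst : (2:ℝ≥0∞)⁻¹ * ENNReal.ofReal (A ^ 2 / (n:ℝ) ^ 2)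
      = ENNReal.ofReal (A ^ 2 / (2 * (n:ℝ) ^ 2)) := by
    rw [show A ^ 2 / (2 * (n:ℝ) ^ 2) = A ^ 2 / (n:ℝ) ^ 2 / 2 by ring,
      ENNReal.ofReal_div_of_pos (by norm_num : (0:ℝ) < 2), div_eq_mul_inv, mul_comm]
    norm_num [div_eq_mul_inv]
  -- final chain
  calc (∫⁻ ω, ENNReal.ofReal (graphDistSum (IRGAux.g0 v₀ (fun e => X e ω)) S) ∂P)
      ≤ ∫⁻ ω, (ENNReal.ofReal (graphDistSum (IRGAux.g1 (fun e => X e ω)) Finset.univ)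
          + 2⁻¹ * ∑ i ∈ S, ∑ j ∈ S.erase i,
              IRGAux.gfun v₀ i j S (fun e => X e ω) * IRGAux.chi v₀ i j (fun e => X e ω)) ∂P :=
        lintegral_mono key
    _ = (∫⁻ ω, ENNReal.ofReal (graphDistSum (IRGAux.g1 (fun e => X e ω)) Finset.univ) ∂P)
          + ∫⁻ ω, (2⁻¹ * ∑ i ∈ S, ∑ j ∈ S.erase i,
              IRGAux.gfun v₀ i j S (fun e => X e ω) * IRGAux.chi v₀ i j (fun e => X e ω)) ∂P :=
        lintegral_add_left hmeasd1 _
    _ = (∫⁻ ω, ENNReal.ofReal (graphDistSum (IRGAux.g1 (fun e => X e ω)) Finset.univ) ∂P)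
          + 2⁻¹ * ∫⁻ ω, (∑ i ∈ S, ∑ j ∈ S.erase i,
              IRGAux.gfun v₀ i j S (fun e => X e ω) * IRGAux.chi v₀ i j (fun e => X e ω)) ∂P := by
        rw [lintegral_const_mul _ hmeassum]
    _ = (∫⁻ ω, ENNReal.ofReal (graphDistSum (IRGAux.g1 (fun e => X e ω)) Finset.univ) ∂P)
          + 2⁻¹ * ∑ i ∈ S, ∑ j ∈ S.erase i, ∫⁻ ω,
              IRGAux.gfun v₀ i j S (fun e => X e ω) * IRGAux.chi v₀ i j (fun e => X e ω) ∂P := by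
        rw [lintegral_finset_sum _ (fun i _ => hmeasinner i)]
        congr 2
        exact Finset.sum_congr rfl fun i _ =>
          lintegral_finset_sum _ (fun j _ =>
            hmeasφ (fun f => IRGAux.gfun v₀ i j S f * IRGAux.chi v₀ i j f))
    _ ≤ (∫⁻ ω, ENNReal.ofReal (graphDistSum (IRGAux.g1 (fun e => X e ω)) Finset.univ) ∂P)
          + 2⁻¹ * ∑ i ∈ S, ∑ j ∈ S.erase i, (ENNReal.ofReal (A ^ 2 / (n:ℝ) ^ 2) *
              ∫⁻ ω, IRGAux.gfun v₀ i j S (fun e => X e ω) ∂P) := by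
        refine add_le_add_right (mul_le_mul_right ?_ _) _
        exact Finset.sum_le_sum fun i hi => Finset.sum_le_sum fun j hj => pair i hi j hj
    _ = (∫⁻ ω, ENNReal.ofReal (graphDistSum (IRGAux.g1 (fun e => X e ω)) Finset.univ) ∂P)
          + 2⁻¹ * (ENNReal.ofReal (A ^ 2 / (n:ℝ) ^ 2) *
              ∑ i ∈ S, ∑ j ∈ S.erase i, ∫⁻ ω, IRGAux.gfun v₀ i j S (fun e => X e ω) ∂P) := by
        simp only [← Finset.mul_sum]
    _ = (∫⁻ ω, ENNReal.ofReal (graphDistSum (IRGAux.g1 (fun e => X e ω)) Finset.univ) ∂P)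
          + 2⁻¹ * (ENNReal.ofReal (A ^ 2 / (n:ℝ) ^ 2) *
              ∫⁻ ω, (∑ i ∈ S, ∑ j ∈ S.erase i,
                IRGAux.gfun v₀ i j S (fun e => X e ω)) ∂P) := by
        rw [hswap]
    _ ≤ (∫⁻ ω, ENNReal.ofReal (graphDistSum (IRGAux.g1 (fun e => X e ω)) Finset.univ) ∂P)
          + 2⁻¹ * (ENNReal.ofReal (A ^ 2 / (n:ℝ) ^ 2) *
              ∫⁻ ω, ENNReal.ofReal (graphDistSum (IRGAux.g0 v₀ (fun e => X e ω)) S *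
                compSqSum (IRGAux.g0 v₀ (fun e => X e ω)) S) ∂P) := by
        exact add_le_add_right (mul_le_mul_right (mul_le_mul_right
          (lintegral_mono sumbound) _) _) _
    _ = (∫⁻ ω, ENNReal.ofReal (graphDistSum (IRGAux.g1 (fun e => X e ω)) Finset.univ) ∂P)
          + ENNReal.ofReal (A ^ 2 / (2 * (n:ℝ) ^ 2)) *
              ∫⁻ ω, ENNReal.ofReal (graphDistSum (IRGAux.g0 v₀ (fun e => X e ω)) S *
                compSqSum (IRGAux.g0 v₀ (fun e => X e ω)) S) ∂P := by
        rw [← mul_assoc, hconst]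
end

section
/- Let (X_i, d_i, μ_i), i = 1, 2, be compact measured metric spaces. Define the Gromov–Hausdorff–Prokhorov distance d_GHP(X₁, X₂) = inf over correspondences C ⊆ X₁×X₂ and measures π on X₁×X₂ of max( (1/2)·dis(C), D(π; μ₁, μ₂), π(Cᶜ) ), where dis(C) = sup{|d₁(x₁,y₁) − d₂(x₂,y₂)| : (x₁,x₂),(y₁,y₂) ∈ C} and D(π;μ₁,μ₂) = ‖μ₁ − π₁‖ + ‖μ₂ − π₂‖ is the total-variation discrepancy of the marginals. Then d_GHP is a pseudometric on the collection of compact measured metric spaces, i.e., it is symmetric and satisfies the triangle inequality. -/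
open MeasureTheory

section PreGHP

open ProbabilityTheory Set

/-- Total variation norm `‖μ − ν‖` of the difference of two finite measures. -/
noncomputable def tvNorm {X : Type} [MeasurableSpace X] (μ ν : Measure X) : ℝ :=
  sSup {r : ℝ | ∃ A : Set X, MeasurableSet A ∧ r = (μ A).toReal - (ν A).toReal} +
    sSup {r : ℝ | ∃ A : Set X, MeasurableSet A ∧ r = (ν A).toReal - (μ A).toReal}

/-- One-sided total variation. -/
noncomputable def tvHalf {X : Type} [MeasurableSpace X] (μ ν : Measure X) : ℝ :=
  sSup {r : ℝ | ∃ A : Set X, MeasurableSet A ∧ r = (μ A).toReal - (ν A).toReal}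

lemma tvNorm_eq {X : Type} [MeasurableSpace X] (μ ν : Measure X) :
    tvNorm μ ν = tvHalf μ ν + tvHalf ν μ := rfl

section TV

variable {α : Type} [MeasurableSpace α] (μ ν ρ : Measure α)
  [IsFiniteMeasure μ] [IsFiniteMeasure ν] [IsFiniteMeasure ρ]

lemma tvHalf_bdd :
    BddAbove {r : ℝ | ∃ A : Set α, MeasurableSet A ∧ r = (μ A).toReal - (ν A).toReal} := by
  refine ⟨(μ univ).toReal, ?_⟩
  rintro r ⟨A, hA, rfl⟩
  have h1 : (μ A).toReal ≤ (μ univ).toReal :=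
    ENNReal.toReal_mono (measure_ne_top _ _) (measure_mono (subset_univ A))
  have h2 : (0:ℝ) ≤ (ν A).toReal := ENNReal.toReal_nonneg
  linarith

lemma le_tvHalf {A : Set α} (hA : MeasurableSet A) :
    (μ A).toReal - (ν A).toReal ≤ tvHalf μ ν :=
  le_csSup (tvHalf_bdd μ ν) ⟨A, hA, rfl⟩

lemma tvHalf_le {c : ℝ} (h : ∀ A : Set α, MeasurableSet A → (μ A).toReal - (ν A).toReal ≤ c) :
    tvHalf μ ν ≤ c := by
  have h0 : (0:ℝ) ≤ c := by simpa using h ∅ MeasurableSet.empty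
  exact Real.sSup_le (by rintro r ⟨A, hA, rfl⟩; exact h A hA) h0

lemma tvHalf_nonneg : 0 ≤ tvHalf μ ν := by
  simpa using le_tvHalf μ ν MeasurableSet.empty

lemma tvHalf_triangle : tvHalf μ ρ ≤ tvHalf μ ν + tvHalf ν ρ := by
  refine tvHalf_le μ ρ fun A hA => ?_
  have h1 := le_tvHalf μ ν hA
  have h2 := le_tvHalf ν ρ hA
  linarith

lemma tvNorm_comm : tvNorm μ ν = tvNorm ν μ := by
  rw [tvNorm_eq, tvNorm_eq]; ring

lemma tvNorm_nonneg : 0 ≤ tvNorm μ ν := by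
  have := tvHalf_nonneg μ ν; have := tvHalf_nonneg ν μ
  rw [tvNorm_eq]; linarith

end TV

/-- The distortion of a subset `C ⊆ X₁ × X₂`:
`sup{|d₁(x₁,y₁) − d₂(x₂,y₂)| : (x₁,x₂),(y₁,y₂) ∈ C}`. -/
noncomputable def corrDistortion {X Y : Type} [MetricSpace X] [MetricSpace Y]
    (C : Set (X × Y)) : ℝ :=
  sSup ((fun q : (X × Y) × (X × Y) => |dist q.1.1 q.2.1 - dist q.1.2 q.2.2|) '' (C ×ˢ C))

section Dis

variable {X Y : Type} [MetricSpace X] [MetricSpace Y] [CompactSpace X] [CompactSpace Y]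

lemma dis_fun_continuous :
    Continuous (fun q : (X × Y) × (X × Y) => |dist q.1.1 q.2.1 - dist q.1.2 q.2.2|) :=
  ((continuous_fst.fst.dist continuous_snd.fst).sub
    (continuous_fst.snd.dist continuous_snd.snd)).abs

lemma dis_fun_bdd (S : Set ((X × Y) × (X × Y))) :
    BddAbove ((fun q : (X × Y) × (X × Y) => |dist q.1.1 q.2.1 - dist q.1.2 q.2.2|) '' S) := by
  obtain ⟨Cx, hCx⟩ := Metric.isBounded_iff.1 (isCompact_univ (X := X)).isBounded
  obtain ⟨Cy, hCy⟩ := Metric.isBounded_iff.1 (isCompact_univ (X := Y)).isBounded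
  refine ⟨Cx + Cy, ?_⟩
  rintro r ⟨q, _, rfl⟩
  have h1 : dist q.1.1 q.2.1 ≤ Cx := hCx trivial trivial
  have h2 : dist q.1.2 q.2.2 ≤ Cy := hCy trivial trivial
  have h3 : (0:ℝ) ≤ dist q.1.1 q.2.1 := dist_nonneg
  have h4 : (0:ℝ) ≤ dist q.1.2 q.2.2 := dist_nonneg
  rw [abs_le]; constructor <;> linarith

lemma le_corrDistortion {C : Set (X × Y)} {p q : X × Y} (hp : p ∈ C) (hq : q ∈ C) :
    |dist p.1 q.1 - dist p.2 q.2| ≤ corrDistortion C :=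
  le_csSup (dis_fun_bdd _) ⟨(p, q), ⟨hp, hq⟩, rfl⟩

lemma corrDistortion_nonneg {C : Set (X × Y)} (h : C.Nonempty) : 0 ≤ corrDistortion C := by
  obtain ⟨p, hp⟩ := h
  simpa using le_corrDistortion hp hp

lemma corrDistortion_le {C : Set (X × Y)} {c : ℝ} (hc : 0 ≤ c)
    (h : ∀ p ∈ C, ∀ q ∈ C, |dist p.1 q.1 - dist p.2 q.2| ≤ c) : corrDistortion C ≤ c := by
  refine Real.sSup_le ?_ hc
  rintro r ⟨q, ⟨h1, h2⟩, rfl⟩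
  exact h _ h1 _ h2

lemma corrDistortion_closure_le (C : Set (X × Y)) :
    corrDistortion (closure C) ≤ corrDistortion C := by
  rcases C.eq_empty_or_nonempty with rfl | hC
  · simp [corrDistortion]
  refine Real.sSup_le ?_ (corrDistortion_nonneg hC)
  rintro r hr
  rw [← closure_prod_eq] at hr
  have h2 := image_closure_subset_closure_image
    (f := fun q : (X × Y) × (X × Y) => |dist q.1.1 q.2.1 - dist q.1.2 q.2.2|)
    (s := C ×ˢ C) dis_fun_continuous hr
  have h3 : ((fun q : (X × Y) × (X × Y) => |dist q.1.1 q.2.1 - dist q.1.2 q.2.2|) '' (C ×ˢ C))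
      ⊆ Iic (corrDistortion C) := fun x hx => le_csSup (dis_fun_bdd _) hx
  exact (isClosed_Iic.closure_subset_iff.2 h3) h2

end Dis

lemma lintegral_toReal_diff_le {α : Type} [MeasurableSpace α] {ν₁ ν₂ : Measure α}
    [IsFiniteMeasure ν₁] [IsFiniteMeasure ν₂] (h : ν₂ ≤ ν₁) {f : α → ENNReal}
    (hfm : Measurable f) (hf1 : ∀ a, f a ≤ 1) :
    (∫⁻ a, f a ∂ν₁).toReal - (∫⁻ a, f a ∂ν₂).toReal
      ≤ (ν₁ univ).toReal - (ν₂ univ).toReal := by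
  have key : ∀ (m : Measure α), ∫⁻ a, f a ∂m + ∫⁻ a, (1 - f a) ∂m = m univ := by
    intro m
    rw [← lintegral_add_left hfm]
    have : ∀ a, f a + (1 - f a) = 1 := fun a => add_tsub_cancel_of_le (hf1 a)
    simp only [this, lintegral_one]
  have h1 := key ν₁
  have h2 := key ν₂
  have hI1 : ∫⁻ a, f a ∂ν₁ ≠ ⊤ := by
    intro hc; rw [hc] at h1; simp at h1; exact (measure_ne_top ν₁ univ) h1.symm
  have hJ1 : ∫⁻ a, (1 - f a) ∂ν₁ ≠ ⊤ := by
    intro hc; rw [hc] at h1; simp at h1; exact (measure_ne_top ν₁ univ) h1.symm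
  have hI2 : ∫⁻ a, f a ∂ν₂ ≠ ⊤ := by
    intro hc; rw [hc] at h2; simp at h2; exact (measure_ne_top ν₂ univ) h2.symm
  have hJ2 : ∫⁻ a, (1 - f a) ∂ν₂ ≠ ⊤ := by
    intro hc; rw [hc] at h2; simp at h2; exact (measure_ne_top ν₂ univ) h2.symm
  have e1 : (∫⁻ a, f a ∂ν₁).toReal + (∫⁻ a, (1 - f a) ∂ν₁).toReal = (ν₁ univ).toReal := by
    rw [← ENNReal.toReal_add hI1 hJ1, h1]
  have e2 : (∫⁻ a, f a ∂ν₂).toReal + (∫⁻ a, (1 - f a) ∂ν₂).toReal = (ν₂ univ).toReal := by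
    rw [← ENNReal.toReal_add hI2 hJ2, h2]
  have hmono : (∫⁻ a, (1 - f a) ∂ν₂).toReal ≤ (∫⁻ a, (1 - f a) ∂ν₁).toReal :=
    ENNReal.toReal_mono hJ1 (lintegral_mono' h le_rfl)
  linarith

end PreGHP

/-- The Gromov–Hausdorff–Prokhorov distance between two measured metric spaces:
infimum over measurable correspondences `C` and finite measures `π` on the product of
`max((1/2) dis(C), ‖μ₁ − π₁‖ + ‖μ₂ − π₂‖, π(Cᶜ))`. -/
noncomputable def dGHP (X Y : Type) [MetricSpace X] [MeasurableSpace X]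
    [MetricSpace Y] [MeasurableSpace Y] (μ : Measure X) (ν : Measure Y) : ℝ :=
  sInf {r : ℝ |
    ∃ C : Set (X × Y), MeasurableSet C ∧
      (∀ x : X, ∃ y : Y, (x, y) ∈ C) ∧ (∀ y : Y, ∃ x : X, (x, y) ∈ C) ∧
      ∃ π : Measure (X × Y), IsFiniteMeasure π ∧
        max (max ((1 / 2) * corrDistortion C) (tvNorm μ π.fst + tvNorm ν π.snd))
          ((π Cᶜ).toReal) ≤ r}

/-- The set of admissible values in the definition of `dGHP`. -/
def GHPSet (X Y : Type) [MetricSpace X] [MeasurableSpace X]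
    [MetricSpace Y] [MeasurableSpace Y] (μ : Measure X) (ν : Measure Y) : Set ℝ :=
  {r : ℝ |
    ∃ C : Set (X × Y), MeasurableSet C ∧
      (∀ x : X, ∃ y : Y, (x, y) ∈ C) ∧ (∀ y : Y, ∃ x : X, (x, y) ∈ C) ∧
      ∃ π : Measure (X × Y), IsFiniteMeasure π ∧
        max (max ((1 / 2) * corrDistortion C) (tvNorm μ π.fst + tvNorm ν π.snd))
          ((π Cᶜ).toReal) ≤ r}

open ProbabilityTheory Set

lemma dGHP_eq (X Y : Type) [MetricSpace X] [MeasurableSpace X]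
    [MetricSpace Y] [MeasurableSpace Y] (μ : Measure X) (ν : Measure Y) :
    dGHP X Y μ ν = sInf (GHPSet X Y μ ν) := rfl

section Swap

variable {X Y : Type} [MetricSpace X] [MeasurableSpace X] [MetricSpace Y] [MeasurableSpace Y]

lemma corrDistortion_swap (C : Set (X × Y)) :
    corrDistortion (Prod.swap ⁻¹' C : Set (Y × X)) = corrDistortion C := by
  unfold corrDistortion
  congr 1
  ext r
  constructor
  · rintro ⟨⟨p, q⟩, ⟨hp, hq⟩, rfl⟩
    exact ⟨((p.2, p.1), (q.2, q.1)), ⟨hp, hq⟩, abs_sub_comm _ _⟩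
  · rintro ⟨⟨p, q⟩, ⟨hp, hq⟩, rfl⟩
    refine ⟨((p.2, p.1), (q.2, q.1)), ⟨?_, ?_⟩, abs_sub_comm _ _⟩
    · simpa using hp
    · simpa using hq

lemma map_swap_fst (π : Measure (X × Y)) : (π.map Prod.swap).fst = π.snd := by
  show (π.map Prod.swap).map Prod.fst = π.map Prod.snd
  rw [Measure.map_map measurable_fst measurable_swap]
  rfl

lemma map_swap_snd (π : Measure (X × Y)) : (π.map Prod.swap).snd = π.fst := by
  show (π.map Prod.swap).map Prod.snd = π.map Prod.fst
  rw [Measure.map_map measurable_snd measurable_swap]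
  rfl

lemma GHPSet_subset_swap (μ : Measure X) (ν : Measure Y) :
    GHPSet X Y μ ν ⊆ GHPSet Y X ν μ := by
  rintro r ⟨C, hC, hl, hr, π, hπ, hle⟩
  haveI := hπ
  refine ⟨Prod.swap ⁻¹' C, hC.preimage measurable_swap,
    fun y => (hr y).imp fun x hx => hx, fun x => (hl x).imp fun y hy => hy,
    π.map Prod.swap, inferInstance, ?_⟩
  have h1 : corrDistortion (Prod.swap ⁻¹' C : Set (Y × X)) = corrDistortion C :=
    corrDistortion_swap C
  have h2 : (π.map Prod.swap) (Prod.swap ⁻¹' C)ᶜ = π Cᶜ := by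
    rw [Measure.map_apply measurable_swap (hC.preimage measurable_swap).compl]
    congr 1
  rw [map_swap_fst, map_swap_snd, h1, h2]
  calc max (max ((1 / 2) * corrDistortion C) (tvNorm ν π.snd + tvNorm μ π.fst)) (π Cᶜ).toReal
      = max (max ((1 / 2) * corrDistortion C) (tvNorm μ π.fst + tvNorm ν π.snd)) (π Cᶜ).toReal := by
        rw [add_comm]
    _ ≤ r := hle

end Swap

section Triangle

variable (X Y Z : Type)
    [MetricSpace X] [CompactSpace X] [Nonempty X] [MeasurableSpace X] [BorelSpace X]
    [MetricSpace Y] [CompactSpace Y] [Nonempty Y] [MeasurableSpace Y] [BorelSpace Y]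
    [MetricSpace Z] [CompactSpace Z] [Nonempty Z] [MeasurableSpace Z] [BorelSpace Z]
    (μ : Measure X) [IsFiniteMeasure μ]
    (ν : Measure Y) [IsFiniteMeasure ν]
    (ρ : Measure Z) [IsFiniteMeasure ρ]

lemma GHPSet_triangle {r s : ℝ} (hr : r ∈ GHPSet X Y μ ν) (hs : s ∈ GHPSet Y Z ν ρ) :
    r + s ∈ GHPSet X Z μ ρ := by
  obtain ⟨C₁₂, hC12, h12l, h12r, π₁₂, hfin12, hle12⟩ := hr
  obtain ⟨C₂₃, hC23, h23l, h23r, π₂₃, hfin23, hle23⟩ := hs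
  haveI := hfin12; haveI := hfin23
  -- extract the three bounds on each side
  have hr_dis : (1 / 2) * corrDistortion C₁₂ ≤ r :=
    le_trans (le_trans (le_max_left _ _) (le_max_left _ _)) hle12
  have hr_tv : tvNorm μ π₁₂.fst + tvNorm ν π₁₂.snd ≤ r :=
    le_trans (le_trans (le_max_right _ _) (le_max_left _ _)) hle12
  have hr_c : (π₁₂ C₁₂ᶜ).toReal ≤ r := le_trans (le_max_right _ _) hle12
  have hs_dis : (1 / 2) * corrDistortion C₂₃ ≤ s :=
    le_trans (le_trans (le_max_left _ _) (le_max_left _ _)) hle23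
  have hs_tv : tvNorm ν π₂₃.fst + tvNorm ρ π₂₃.snd ≤ s :=
    le_trans (le_trans (le_max_right _ _) (le_max_left _ _)) hle23
  have hs_c : (π₂₃ C₂₃ᶜ).toReal ≤ s := le_trans (le_max_right _ _) hle23
  -- the composed correspondence, via closures
  set K₁₂ : Set (X × Y) := closure C₁₂ with hK12def
  set K₂₃ : Set (Y × Z) := closure C₂₃ with hK23def
  have hK12c : IsClosed K₁₂ := isClosed_closure
  have hK23c : IsClosed K₂₃ := isClosed_closure
  set C₁₃ : Set (X × Z) := {p : X × Z | ∃ y : Y, (p.1, y) ∈ K₁₂ ∧ (y, p.2) ∈ K₂₃} with hC13def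
  have hT : IsClosed {t : X × Y × Z | (t.1, t.2.1) ∈ K₁₂ ∧ (t.2.1, t.2.2) ∈ K₂₃} :=
    (hK12c.preimage (continuous_fst.prodMk continuous_snd.fst)).inter
      (hK23c.preimage (continuous_snd.fst.prodMk continuous_snd.snd))
  have hC13img : C₁₃ = (fun t : X × Y × Z => (t.1, t.2.2)) ''
      {t : X × Y × Z | (t.1, t.2.1) ∈ K₁₂ ∧ (t.2.1, t.2.2) ∈ K₂₃} := by
    ext ⟨x, z⟩
    constructor
    · rintro ⟨y, h1, h2⟩
      exact ⟨(x, y, z), ⟨h1, h2⟩, rfl⟩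
    · rintro ⟨⟨x', y, z'⟩, ⟨h1, h2⟩, heq⟩
      cases heq
      exact ⟨y, h1, h2⟩
  have hC13closed : IsClosed C₁₃ := by
    rw [hC13img]
    exact (hT.isCompact.image (continuous_fst.prodMk continuous_snd.snd)).isClosed
  have hsurj1 : ∀ x : X, ∃ z : Z, (x, z) ∈ C₁₃ := by
    intro x
    obtain ⟨y, hy⟩ := h12l x
    obtain ⟨z, hz⟩ := h23l y
    exact ⟨z, y, subset_closure hy, subset_closure hz⟩
  have hsurj2 : ∀ z : Z, ∃ x : X, (x, z) ∈ C₁₃ := by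
    intro z
    obtain ⟨y, hy⟩ := h23r z
    obtain ⟨x, hx⟩ := h12r y
    exact ⟨x, y, subset_closure hx, subset_closure hy⟩
  -- measures: disintegrate both couplings over Y
  set σ : Measure (Y × X) := π₁₂.map Prod.swap with hσdef
  haveI : IsFiniteMeasure σ := by rw [hσdef]; infer_instance
  set η₁ : Measure Y := σ.fst with hη₁def
  set η₂ : Measure Y := π₂₃.fst with hη₂def
  set κ₁ : Kernel Y X := σ.condKernel with hκ₁def
  set κ₂ : Kernel Y Z := π₂₃.condKernel with hκ₂def
  haveI : IsMarkovKernel κ₁ := by rw [hκ₁def]; infer_instance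
  haveI : IsMarkovKernel κ₂ := by rw [hκ₂def]; infer_instance
  have hdis1 : η₁ ⊗ₘ κ₁ = σ := σ.disintegrate σ.condKernel
  have hdis2 : η₂ ⊗ₘ κ₂ = π₂₃ := π₂₃.disintegrate π₂₃.condKernel
  -- Hahn decomposition of η₁ vs η₂
  obtain ⟨E, hEm, hH1, hH2⟩ := hahn_decomposition (μ := η₁) (ν := η₂)
  set η : Measure Y := η₂.restrict E + η₁.restrict Eᶜ with hηdef
  have hη₁le : η ≤ η₁ := by
    rw [Measure.le_iff]
    intro B hB
    rw [hηdef, Measure.add_apply, Measure.restrict_apply hB, Measure.restrict_apply hB]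
    have h1 : η₂ (B ∩ E) ≤ η₁ (B ∩ E) := hH1 _ (hB.inter hEm) inter_subset_right
    have h2 : η₁ (B ∩ E) + η₁ (B \ E) = η₁ B := measure_inter_add_diff B hEm
    have h3 : B ∩ Eᶜ = B \ E := rfl
    rw [h3]
    calc η₂ (B ∩ E) + η₁ (B \ E) ≤ η₁ (B ∩ E) + η₁ (B \ E) := add_le_add_left h1 _
      _ = η₁ B := h2
  have hη₂le : η ≤ η₂ := by
    rw [Measure.le_iff]
    intro B hB
    rw [hηdef, Measure.add_apply, Measure.restrict_apply hB, Measure.restrict_apply hB]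
    have h1 : η₁ (B ∩ Eᶜ) ≤ η₂ (B ∩ Eᶜ) := hH2 _ (hB.inter hEm.compl) inter_subset_right
    have h2 : η₂ (B ∩ E) + η₂ (B \ E) = η₂ B := measure_inter_add_diff B hEm
    have h3 : B ∩ Eᶜ = B \ E := rfl
    rw [h3] at h1 ⊢
    calc η₂ (B ∩ E) + η₁ (B \ E) ≤ η₂ (B ∩ E) + η₂ (B \ E) := add_le_add_right h1 _
      _ = η₂ B := h2
  haveI : IsFiniteMeasure η := isFiniteMeasure_of_le η₁ hη₁le
  -- the glued coupling
  set πt : Measure (Y × X × Z) := η ⊗ₘ (κ₁ ×ₖ κ₂) with hπtdef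
  haveI : IsFiniteMeasure πt := by rw [hπtdef]; infer_instance
  set π₁₃ : Measure (X × Z) := πt.snd with hπ₁₃def
  haveI : IsFiniteMeasure π₁₃ := by rw [hπ₁₃def]; infer_instance
  -- marginal formulas
  have hfst : ∀ A : Set X, MeasurableSet A → π₁₃.fst A = ∫⁻ y, κ₁ y A ∂η := by
    intro A hA
    rw [hπ₁₃def, Measure.fst_apply hA, Measure.snd_apply (hA.preimage measurable_fst),
      hπtdef, Measure.compProd_apply ((hA.preimage measurable_fst).preimage measurable_snd)]
    refine lintegral_congr fun y => ?_
    have h0 : (Prod.mk y ⁻¹' (Prod.snd ⁻¹' (Prod.fst ⁻¹' A)) : Set (X × Z)) = Prod.fst ⁻¹' A := rfl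
    rw [h0, Kernel.prod_apply, ← Set.prod_univ, Measure.prod_prod, measure_univ, mul_one]
  have hsnd : ∀ B : Set Z, MeasurableSet B → π₁₃.snd B = ∫⁻ y, κ₂ y B ∂η := by
    intro B hB
    rw [hπ₁₃def, Measure.snd_apply hB, Measure.snd_apply (hB.preimage measurable_snd),
      hπtdef, Measure.compProd_apply ((hB.preimage measurable_snd).preimage measurable_snd)]
    refine lintegral_congr fun y => ?_
    have h0 : (Prod.mk y ⁻¹' (Prod.snd ⁻¹' (Prod.snd ⁻¹' B)) : Set (X × Z)) = Prod.snd ⁻¹' B := rfl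
    rw [h0, Kernel.prod_apply, ← Set.univ_prod, Measure.prod_prod, measure_univ, one_mul]
  have hfst12 : ∀ A : Set X, MeasurableSet A → π₁₂.fst A = ∫⁻ y, κ₁ y A ∂η₁ := by
    intro A hA
    have h1 : π₁₂.fst A = σ.snd A := by
      rw [Measure.fst_apply hA, Measure.snd_apply hA, hσdef,
        Measure.map_apply measurable_swap (hA.preimage measurable_snd)]
      rfl
    rw [h1, Measure.snd_apply hA, ← hdis1,
      Measure.compProd_apply (hA.preimage measurable_snd)]
    exact lintegral_congr fun y => rfl
  have hsnd23 : ∀ B : Set Z, MeasurableSet B → π₂₃.snd B = ∫⁻ y, κ₂ y B ∂η₂ := by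
    intro B hB
    rw [Measure.snd_apply hB, ← hdis2, Measure.compProd_apply (hB.preimage measurable_snd)]
    exact lintegral_congr fun y => rfl
  have hη₁snd : η₁ = π₁₂.snd := by
    refine Measure.ext fun B hB => ?_
    rw [hη₁def, Measure.fst_apply hB, hσdef,
      Measure.map_apply measurable_swap (hB.preimage measurable_fst), Measure.snd_apply hB]
    rfl
  -- total variation estimates
  have hδ1 : (η₁ univ).toReal - (η univ).toReal ≤ tvHalf η₁ η₂ := by
    have h0 : η univ = η₂ E + η₁ Eᶜ := by
      rw [hηdef, Measure.add_apply, Measure.restrict_apply MeasurableSet.univ,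
        Measure.restrict_apply MeasurableSet.univ, univ_inter, univ_inter]
    have h1 : η₁ univ = η₁ E + η₁ Eᶜ := (measure_add_measure_compl hEm).symm
    have h2 := le_tvHalf η₁ η₂ hEm
    rw [h0, h1, ENNReal.toReal_add (measure_ne_top _ _) (measure_ne_top _ _),
      ENNReal.toReal_add (measure_ne_top _ _) (measure_ne_top _ _)]
    linarith
  have hδ2 : (η₂ univ).toReal - (η univ).toReal ≤ tvHalf η₂ η₁ := by
    have h0 : η univ = η₂ E + η₁ Eᶜ := by
      rw [hηdef, Measure.add_apply, Measure.restrict_apply MeasurableSet.univ,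
        Measure.restrict_apply MeasurableSet.univ, univ_inter, univ_inter]
    have h1 : η₂ univ = η₂ E + η₂ Eᶜ := (measure_add_measure_compl hEm).symm
    have h2 := le_tvHalf η₂ η₁ hEm.compl
    rw [h0, h1, ENNReal.toReal_add (measure_ne_top _ _) (measure_ne_top _ _),
      ENNReal.toReal_add (measure_ne_top _ _) (measure_ne_top _ _)]
    linarith
  have hdiff1 : ∀ A : Set X, MeasurableSet A →
      (π₁₂.fst A).toReal - (π₁₃.fst A).toReal ≤ (η₁ univ).toReal - (η univ).toReal := by
    intro A hA
    rw [hfst12 A hA, hfst A hA]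
    exact lintegral_toReal_diff_le hη₁le (Kernel.measurable_coe κ₁ hA) (fun y => prob_le_one)
  have hdiff2 : ∀ B : Set Z, MeasurableSet B →
      (π₂₃.snd B).toReal - (π₁₃.snd B).toReal ≤ (η₂ univ).toReal - (η univ).toReal := by
    intro B hB
    rw [hsnd23 B hB, hsnd B hB]
    exact lintegral_toReal_diff_le hη₂le (Kernel.measurable_coe κ₂ hB) (fun y => prob_le_one)
  have hmono1 : ∀ A : Set X, MeasurableSet A → π₁₃.fst A ≤ π₁₂.fst A := by
    intro A hA
    rw [hfst A hA, hfst12 A hA]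
    exact lintegral_mono' hη₁le le_rfl
  have hmono2 : ∀ B : Set Z, MeasurableSet B → π₁₃.snd B ≤ π₂₃.snd B := by
    intro B hB
    rw [hsnd B hB, hsnd23 B hB]
    exact lintegral_mono' hη₂le le_rfl
  have htv1 : tvNorm μ π₁₃.fst ≤ tvNorm μ π₁₂.fst + ((η₁ univ).toReal - (η univ).toReal) := by
    rw [tvNorm_eq, tvNorm_eq]
    have ha : tvHalf μ π₁₃.fst ≤ tvHalf μ π₁₂.fst + ((η₁ univ).toReal - (η univ).toReal) := by
      refine tvHalf_le _ _ fun A hA => ?_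
      have h1 := le_tvHalf μ π₁₂.fst hA
      have h2 := hdiff1 A hA
      linarith
    have hb : tvHalf π₁₃.fst μ ≤ tvHalf π₁₂.fst μ := by
      refine tvHalf_le _ _ fun A hA => ?_
      have h1 : (π₁₃.fst A).toReal ≤ (π₁₂.fst A).toReal :=
        ENNReal.toReal_mono (measure_ne_top _ _) (hmono1 A hA)
      have h2 := le_tvHalf π₁₂.fst μ hA
      linarith
    linarith
  have htv2 : tvNorm ρ π₁₃.snd ≤ tvNorm ρ π₂₃.snd + ((η₂ univ).toReal - (η univ).toReal) := by
    rw [tvNorm_eq, tvNorm_eq]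
    have ha : tvHalf ρ π₁₃.snd ≤ tvHalf ρ π₂₃.snd + ((η₂ univ).toReal - (η univ).toReal) := by
      refine tvHalf_le _ _ fun B hB => ?_
      have h1 := le_tvHalf ρ π₂₃.snd hB
      have h2 := hdiff2 B hB
      linarith
    have hb : tvHalf π₁₃.snd ρ ≤ tvHalf π₂₃.snd ρ := by
      refine tvHalf_le _ _ fun B hB => ?_
      have h1 : (π₁₃.snd B).toReal ≤ (π₂₃.snd B).toReal :=
        ENNReal.toReal_mono (measure_ne_top _ _) (hmono2 B hB)
      have h2 := le_tvHalf π₂₃.snd ρ hB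
      linarith
    linarith
  have hD13 : tvNorm μ π₁₃.fst + tvNorm ρ π₁₃.snd ≤ r + s := by
    have t1 : tvHalf η₁ η₂ ≤ tvHalf η₁ ν + tvHalf ν η₂ := tvHalf_triangle _ _ _
    have t2 : tvHalf η₂ η₁ ≤ tvHalf η₂ ν + tvHalf ν η₁ := tvHalf_triangle _ _ _
    have e1 : tvNorm ν π₁₂.snd = tvHalf ν η₁ + tvHalf η₁ ν := by rw [hη₁snd, tvNorm_eq]
    have e2 : tvNorm ν π₂₃.fst = tvHalf ν η₂ + tvHalf η₂ ν := by rw [hη₂def, tvNorm_eq]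
    rw [e1] at hr_tv
    rw [e2] at hs_tv
    linarith
  -- complement estimate
  have hU1m : MeasurableSet {p : Y × X × Z | (p.2.1, p.1) ∈ K₁₂ᶜ} :=
    (hK12c.measurableSet.compl).preimage
      ((measurable_fst.comp measurable_snd).prodMk measurable_fst)
  have hU2m : MeasurableSet {p : Y × X × Z | (p.1, p.2.2) ∈ K₂₃ᶜ} :=
    (hK23c.measurableSet.compl).preimage
      (measurable_fst.prodMk (measurable_snd.comp measurable_snd))
  have hW1m : MeasurableSet {p : Y × X | (p.2, p.1) ∈ K₁₂ᶜ} :=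
    (hK12c.measurableSet.compl).preimage (measurable_snd.prodMk measurable_fst)
  have hU1 : πt {p : Y × X × Z | (p.2.1, p.1) ∈ K₁₂ᶜ} ≤ π₁₂ C₁₂ᶜ := by
    rw [hπtdef, Measure.compProd_apply hU1m]
    have step1 : ∫⁻ y, (κ₁ ×ₖ κ₂) y (Prod.mk y ⁻¹' {p : Y × X × Z | (p.2.1, p.1) ∈ K₁₂ᶜ}) ∂η
        = ∫⁻ y, κ₁ y {x : X | (x, y) ∈ K₁₂ᶜ} ∂η := by
      refine lintegral_congr fun y => ?_
      have h0 : (Prod.mk y ⁻¹' {p : Y × X × Z | (p.2.1, p.1) ∈ K₁₂ᶜ} : Set (X × Z))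
          = Prod.fst ⁻¹' {x : X | (x, y) ∈ K₁₂ᶜ} := rfl
      rw [h0, Kernel.prod_apply, ← Set.prod_univ, Measure.prod_prod, measure_univ, mul_one]
    rw [step1]
    have step2 : ∫⁻ y, κ₁ y {x : X | (x, y) ∈ K₁₂ᶜ} ∂η
        ≤ ∫⁻ y, κ₁ y {x : X | (x, y) ∈ K₁₂ᶜ} ∂η₁ := lintegral_mono' hη₁le le_rfl
    have step3 : ∫⁻ y, κ₁ y {x : X | (x, y) ∈ K₁₂ᶜ} ∂η₁ = σ {p : Y × X | (p.2, p.1) ∈ K₁₂ᶜ} := by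
      rw [← hdis1, Measure.compProd_apply hW1m]
      exact lintegral_congr fun y => rfl
    have step4 : σ {p : Y × X | (p.2, p.1) ∈ K₁₂ᶜ} = π₁₂ K₁₂ᶜ := by
      rw [hσdef, Measure.map_apply measurable_swap hW1m]
      congr 1
    have step5 : π₁₂ K₁₂ᶜ ≤ π₁₂ C₁₂ᶜ :=
      measure_mono (compl_subset_compl.2 subset_closure)
    calc ∫⁻ y, κ₁ y {x : X | (x, y) ∈ K₁₂ᶜ} ∂η ≤ _ := step2
      _ = _ := step3
      _ = _ := step4
      _ ≤ _ := step5
  have hU2 : πt {p : Y × X × Z | (p.1, p.2.2) ∈ K₂₃ᶜ} ≤ π₂₃ C₂₃ᶜ := by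
    rw [hπtdef, Measure.compProd_apply hU2m]
    have step1 : ∫⁻ y, (κ₁ ×ₖ κ₂) y (Prod.mk y ⁻¹' {p : Y × X × Z | (p.1, p.2.2) ∈ K₂₃ᶜ}) ∂η
        = ∫⁻ y, κ₂ y {z : Z | (y, z) ∈ K₂₃ᶜ} ∂η := by
      refine lintegral_congr fun y => ?_
      have h0 : (Prod.mk y ⁻¹' {p : Y × X × Z | (p.1, p.2.2) ∈ K₂₃ᶜ} : Set (X × Z))
          = Prod.snd ⁻¹' {z : Z | (y, z) ∈ K₂₃ᶜ} := rfl
      rw [h0, Kernel.prod_apply, ← Set.univ_prod, Measure.prod_prod, measure_univ, one_mul]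
    rw [step1]
    have step2 : ∫⁻ y, κ₂ y {z : Z | (y, z) ∈ K₂₃ᶜ} ∂η
        ≤ ∫⁻ y, κ₂ y {z : Z | (y, z) ∈ K₂₃ᶜ} ∂η₂ := lintegral_mono' hη₂le le_rfl
    have step3 : ∫⁻ y, κ₂ y {z : Z | (y, z) ∈ K₂₃ᶜ} ∂η₂ = π₂₃ K₂₃ᶜ := by
      rw [← hdis2, Measure.compProd_apply hK23c.measurableSet.compl]
      exact lintegral_congr fun y => rfl
    have step5 : π₂₃ K₂₃ᶜ ≤ π₂₃ C₂₃ᶜ :=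
      measure_mono (compl_subset_compl.2 subset_closure)
    calc ∫⁻ y, κ₂ y {z : Z | (y, z) ∈ K₂₃ᶜ} ∂η ≤ _ := step2
      _ = _ := step3
      _ ≤ _ := step5
  have hcomp : (π₁₃ C₁₃ᶜ).toReal ≤ r + s := by
    have hsub : (Prod.snd ⁻¹' C₁₃ᶜ : Set (Y × X × Z)) ⊆
        {p : Y × X × Z | (p.2.1, p.1) ∈ K₁₂ᶜ} ∪ {p : Y × X × Z | (p.1, p.2.2) ∈ K₂₃ᶜ} := by
      rintro ⟨y, x, z⟩ hp
      rw [mem_union]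
      by_contra hcon
      push_neg at hcon
      obtain ⟨h1, h2⟩ := hcon
      simp only [mem_setOf_eq, mem_compl_iff, not_not] at h1 h2
      exact hp ⟨y, h1, h2⟩
    have h1 : π₁₃ C₁₃ᶜ ≤ π₁₂ C₁₂ᶜ + π₂₃ C₂₃ᶜ := by
      rw [hπ₁₃def, Measure.snd_apply hC13closed.measurableSet.compl]
      calc πt (Prod.snd ⁻¹' C₁₃ᶜ)
          ≤ πt ({p : Y × X × Z | (p.2.1, p.1) ∈ K₁₂ᶜ} ∪ {p : Y × X × Z | (p.1, p.2.2) ∈ K₂₃ᶜ}) :=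
            measure_mono hsub
        _ ≤ πt {p : Y × X × Z | (p.2.1, p.1) ∈ K₁₂ᶜ} + πt {p : Y × X × Z | (p.1, p.2.2) ∈ K₂₃ᶜ} :=
            measure_union_le _ _
        _ ≤ π₁₂ C₁₂ᶜ + π₂₃ C₂₃ᶜ := add_le_add hU1 hU2
    have h2 : (π₁₃ C₁₃ᶜ).toReal ≤ (π₁₂ C₁₂ᶜ + π₂₃ C₂₃ᶜ).toReal :=
      ENNReal.toReal_mono (ENNReal.add_ne_top.2 ⟨measure_ne_top _ _, measure_ne_top _ _⟩) h1
    rw [ENNReal.toReal_add (measure_ne_top _ _) (measure_ne_top _ _)] at h2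
    linarith
  -- distortion estimate
  have hK12ne : K₁₂.Nonempty := by
    obtain ⟨y₀, hy₀⟩ := h12l (Classical.arbitrary X)
    exact ⟨_, subset_closure hy₀⟩
  have hK23ne : K₂₃.Nonempty := by
    obtain ⟨z₀, hz₀⟩ := h23l (Classical.arbitrary Y)
    exact ⟨_, subset_closure hz₀⟩
  have hn1 : 0 ≤ corrDistortion K₁₂ := corrDistortion_nonneg hK12ne
  have hn2 : 0 ≤ corrDistortion K₂₃ := corrDistortion_nonneg hK23ne
  have hdis13 : (1 / 2) * corrDistortion C₁₃ ≤ r + s := by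
    have hcl1 : corrDistortion K₁₂ ≤ corrDistortion C₁₂ := corrDistortion_closure_le _
    have hcl2 : corrDistortion K₂₃ ≤ corrDistortion C₂₃ := corrDistortion_closure_le _
    have hle : corrDistortion C₁₃ ≤ corrDistortion K₁₂ + corrDistortion K₂₃ := by
      refine corrDistortion_le (by linarith) ?_
      rintro p ⟨y, hp1, hp2⟩ q ⟨y', hq1, hq2⟩
      have h1 : |dist p.1 q.1 - dist y y'| ≤ corrDistortion K₁₂ := le_corrDistortion hp1 hq1
      have h2 : |dist y y' - dist p.2 q.2| ≤ corrDistortion K₂₃ := le_corrDistortion hp2 hq2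
      have h3 := abs_sub_le (dist p.1 q.1) (dist y y') (dist p.2 q.2)
      linarith
    linarith
  -- assemble
  refine ⟨C₁₃, hC13closed.measurableSet, hsurj1, hsurj2, π₁₃, inferInstance, ?_⟩
  rw [max_le_iff, max_le_iff]
  exact ⟨⟨hdis13, hD13⟩, hcomp⟩

end Triangle

lemma GHPSet_nonempty (X Y : Type) [MetricSpace X] [MeasurableSpace X] [Nonempty X]
    [MetricSpace Y] [MeasurableSpace Y] [Nonempty Y] (μ : Measure X) (ν : Measure Y) :
    (GHPSet X Y μ ν).Nonempty := by
  refine ⟨_, univ, MeasurableSet.univ, fun x => ⟨Classical.arbitrary Y, trivial⟩,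
    fun y => ⟨Classical.arbitrary X, trivial⟩, 0, inferInstance, le_rfl⟩

lemma GHPSet_bddBelow (X Y : Type) [MetricSpace X] [MeasurableSpace X]
    [MetricSpace Y] [MeasurableSpace Y] (μ : Measure X) (ν : Measure Y) :
    BddBelow (GHPSet X Y μ ν) := by
  refine ⟨0, ?_⟩
  rintro r ⟨C, _, _, _, π, _, hle⟩
  exact le_trans ENNReal.toReal_nonneg (le_trans (le_max_right _ _) hle)

/-- `d_GHP` is a pseudometric on compact measured metric spaces: it is symmetric and
satisfies the triangle inequality. -/
theorem dGHP_pseudometric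
    (X Y Z : Type)
    [MetricSpace X] [CompactSpace X] [Nonempty X] [MeasurableSpace X] [BorelSpace X]
    [MetricSpace Y] [CompactSpace Y] [Nonempty Y] [MeasurableSpace Y] [BorelSpace Y]
    [MetricSpace Z] [CompactSpace Z] [Nonempty Z] [MeasurableSpace Z] [BorelSpace Z]
    (μ : Measure X) [IsFiniteMeasure μ]
    (ν : Measure Y) [IsFiniteMeasure ν]
    (ρ : Measure Z) [IsFiniteMeasure ρ] :
    dGHP X Y μ ν = dGHP Y X ν μ ∧
    dGHP X Z μ ρ ≤ dGHP X Y μ ν + dGHP Y Z ν ρ := by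
  constructor
  · rw [dGHP_eq, dGHP_eq]
    exact congrArg sInf (subset_antisymm (GHPSet_subset_swap μ ν) (GHPSet_subset_swap ν μ))
  · rw [dGHP_eq, dGHP_eq, dGHP_eq]
    have hne1 := GHPSet_nonempty X Y μ ν
    have hne2 := GHPSet_nonempty Y Z ν ρ
    have hbdd := GHPSet_bddBelow X Z μ ρ
    have key : ∀ r ∈ GHPSet X Y μ ν, ∀ s ∈ GHPSet Y Z ν ρ,
        sInf (GHPSet X Z μ ρ) ≤ r + s := fun r hr s hs =>
      csInf_le hbdd (GHPSet_triangle X Y Z μ ν ρ hr hs)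
    have h2 : ∀ r ∈ GHPSet X Y μ ν, sInf (GHPSet X Z μ ρ) - r ≤ sInf (GHPSet Y Z ν ρ) :=
      fun r hr => le_csInf hne2 fun s hs => by linarith [key r hr s hs]
    have h3 : sInf (GHPSet X Z μ ρ) - sInf (GHPSet Y Z ν ρ) ≤ sInf (GHPSet X Y μ ν) :=
      le_csInf hne1 fun r hr => by linarith [h2 r hr]
    linarith
end
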